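/- arXiv:1112.1236 — 3 statements merged into one kernel-verified Lean document; each statement's English description precedes it below -/
import Mathlib

section
/- Let D be an integral domain and * a stable star operation on D such that D is *-sharp. Then every finitely generated nonzero ideal of D is *-invertible. -/
open scoped nonZeroDivisors

/-- A star operation on an integral domain `D` with quotient field `K`: a map
`I ↦ I*` on (nonzero) fractional ideals such that `D* = D`, `(aI)* = a·I*`,
`I ⊆ I*`, `I ⊆ J → I* ⊆ J*` and `(I*)* = I*`. (The value at `0` is irrelevant.) -/
structure StarOperation (D K : Type*) [CommRing D] [IsDomain D] [Field K]
    [Algebra D K] [IsFractionRing D K] where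
  star : FractionalIdeal D⁰ K → FractionalIdeal D⁰ K
  star_one : star 1 = 1
  star_smul : ∀ (a : K), a ≠ 0 → ∀ I : FractionalIdeal D⁰ K, I ≠ 0 →
    star (FractionalIdeal.spanSingleton D⁰ a * I) = FractionalIdeal.spanSingleton D⁰ a * star I
  le_star : ∀ I : FractionalIdeal D⁰ K, I ≠ 0 → I ≤ star I
  star_mono : ∀ I J : FractionalIdeal D⁰ K, I ≠ 0 → J ≠ 0 → I ≤ J → star I ≤ star J
  star_star : ∀ I : FractionalIdeal D⁰ K, I ≠ 0 → star (star I) = star I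

section StarSharpDefs

variable {D K : Type*} [CommRing D] [IsDomain D] [Field K] [Algebra D K] [IsFractionRing D K]

/-- `D` is sharp with respect to the operation `star` ("`*`-sharp"): whenever
`I ⊇ A·B` for nonzero ideals `I, A, B` of `D`, there exist nonzero ideals `H, J`
with `I* = (HJ)*`, `H* ⊇ A` and `J* ⊇ B`. -/
def IsSharpOp (star : FractionalIdeal D⁰ K → FractionalIdeal D⁰ K) : Prop :=
  ∀ I A B : Ideal D, I ≠ 0 → A ≠ 0 → B ≠ 0 → A * B ≤ I →
    ∃ H J : Ideal D, H ≠ 0 ∧ J ≠ 0 ∧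
      star (I : FractionalIdeal D⁰ K) =
        star ((H : FractionalIdeal D⁰ K) * (J : FractionalIdeal D⁰ K)) ∧
      (A : FractionalIdeal D⁰ K) ≤ star (H : FractionalIdeal D⁰ K) ∧
      (B : FractionalIdeal D⁰ K) ≤ star (J : FractionalIdeal D⁰ K)

/-- `D` is `*`-sharp for the star operation `s`. -/
def StarOperation.IsSharp (s : StarOperation D K) : Prop :=
  IsSharpOp s.star

/-- A star operation is stable if it distributes over (finite) intersections of
nonzero fractional ideals. -/
def StarOperation.IsStable (s : StarOperation D K) : Prop :=
  ∀ I J : FractionalIdeal D⁰ K, I ≠ 0 → J ≠ 0 → s.star (I ⊓ J) = s.star I ⊓ s.star J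

end StarSharpDefs


set_option linter.unusedSectionVars false
set_option linter.unusedVariables false

namespace SharpAux

open FractionalIdeal

variable {D K : Type*} [CommRing D] [IsDomain D] [Field K] [Algebra D K] [IsFractionRing D K]

/-- every nonzero fractional ideal contains a nonzero element -/
theorem exists_mem_ne_zero {I : FractionalIdeal D⁰ K} (hI : I ≠ 0) :
    ∃ x ∈ I, x ≠ (0 : K) := by
  by_contra h
  push_neg at h
  exact hI (FractionalIdeal.eq_zero_iff.mpr h)

theorem mul_ne_zero' {I J : FractionalIdeal D⁰ K} (hI : I ≠ 0) (hJ : J ≠ 0) : I * J ≠ 0 := by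
  obtain ⟨x, hxI, hx⟩ := exists_mem_ne_zero hI
  obtain ⟨y, hyJ, hy⟩ := exists_mem_ne_zero hJ
  intro h
  have : x * y ∈ I * J := FractionalIdeal.mul_mem_mul hxI hyJ
  rw [h] at this
  exact (mul_ne_zero hx hy) ((FractionalIdeal.eq_zero_iff.mp rfl) _ this)

theorem one_div_ne_zero' {I : FractionalIdeal D⁰ K} (hI : I ≠ 0) :
    (1 : FractionalIdeal D⁰ K) / I ≠ 0 := by
  obtain ⟨a, ha, hfrac⟩ := I.isFractional
  have ha0 : algebraMap D K a ≠ 0 := by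
    simpa using (map_ne_zero_iff _ (IsFractionRing.injective D K)).mpr
      (nonZeroDivisors.ne_zero ha)
  intro h
  have hmem : algebraMap D K a ∈ (1 : FractionalIdeal D⁰ K) / I := by
    rw [FractionalIdeal.mem_div_iff_of_ne_zero hI]
    intro y hy
    obtain ⟨c, hc⟩ := hfrac y hy
    refine (FractionalIdeal.mem_one_iff _).mpr ⟨c, ?_⟩
    rw [hc, Algebra.smul_def]
  rw [h] at hmem
  exact ha0 (FractionalIdeal.eq_zero_iff.mp rfl _ hmem)

theorem sup_ne_zero_left {I J : FractionalIdeal D⁰ K} (hI : I ≠ 0) : I ⊔ J ≠ 0 := by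
  intro h
  apply hI
  rw [FractionalIdeal.eq_zero_iff] at h ⊢
  exact fun x hx => h x (le_sup_left (a := I) (b := J) hx)

/-- two nonzero fractional ideals have nonzero intersection -/
theorem inf_ne_zero' {I J : FractionalIdeal D⁰ K} (hI : I ≠ 0) (hJ : J ≠ 0) : I ⊓ J ≠ 0 := by
  obtain ⟨x, hxI, hx⟩ := exists_mem_ne_zero hI
  obtain ⟨y, hyJ, hy⟩ := exists_mem_ne_zero hJ
  obtain ⟨a, b, hb, hab⟩ := IsFractionRing.div_surjective (A := D) (x / y)
  have hb0 : algebraMap D K b ≠ 0 := by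
    simpa using (map_ne_zero_iff _ (IsFractionRing.injective D K)).mpr
      (nonZeroDivisors.ne_zero hb)
  have hxy : x / y ≠ 0 := div_ne_zero hx hy
  have ha0 : algebraMap D K a ≠ 0 := by
    intro h0
    apply hxy
    rw [← hab, h0, zero_div]
  have key : algebraMap D K b * x = algebraMap D K a * y := by
    have h1 : x / y = algebraMap D K a / algebraMap D K b := hab.symm
    rw [div_eq_div_iff hy hb0] at h1
    rw [mul_comm x] at h1
    exact h1
  have hmem : algebraMap D K b * x ∈ I ⊓ J := by
    rw [← FractionalIdeal.mem_coe, FractionalIdeal.coe_inf, Submodule.mem_inf]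
    simp only [FractionalIdeal.mem_coe]
    constructor
    · have he : algebraMap D K b * x = b • x := (Algebra.smul_def b x).symm
      rw [he]
      exact Submodule.smul_mem _ _ hxI
    · rw [key]
      have he : algebraMap D K a * y = a • y := (Algebra.smul_def a y).symm
      rw [he]
      exact Submodule.smul_mem _ _ hyJ
  intro h
  rw [h] at hmem
  exact (mul_ne_zero hb0 hx) (FractionalIdeal.eq_zero_iff.mp rfl _ hmem)



variable (s : StarOperation D K)

theorem star_ne_zero {I : FractionalIdeal D⁰ K} (hI : I ≠ 0) : s.star I ≠ 0 := by
  intro h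
  obtain ⟨x, hx, hx0⟩ := exists_mem_ne_zero hI
  have := s.le_star I hI hx
  rw [h] at this
  exact hx0 (FractionalIdeal.eq_zero_iff.mp rfl _ this)

theorem one_ne_zero'' : (1 : FractionalIdeal D⁰ K) ≠ 0 := one_ne_zero

theorem star_le_one {I : FractionalIdeal D⁰ K} (hI : I ≠ 0) (h1 : I ≤ 1) : s.star I ≤ 1 := by
  have := s.star_mono I 1 hI one_ne_zero h1
  rwa [s.star_one] at this

theorem star_spanSingleton {x : K} (hx : x ≠ 0) :
    s.star (FractionalIdeal.spanSingleton D⁰ x) = FractionalIdeal.spanSingleton D⁰ x := by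
  have := s.star_smul x hx 1 one_ne_zero
  rwa [mul_one, s.star_one, mul_one] at this

/-- key: M * (star N) ≤ star (M * N) -/
theorem mul_star_le {M N : FractionalIdeal D⁰ K} (hM : M ≠ 0) (hN : N ≠ 0) :
    M * s.star N ≤ s.star (M * N) := by
  rw [FractionalIdeal.mul_le]
  intro i hi j hj
  by_cases hi0 : i = 0
  · rw [hi0, zero_mul]; exact zero_mem _
  have h1 : i * j ∈ FractionalIdeal.spanSingleton D⁰ i * s.star N :=
    FractionalIdeal.mul_mem_mul (FractionalIdeal.mem_spanSingleton_self _ i) hj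
  have h2 : FractionalIdeal.spanSingleton D⁰ i * s.star N
      = s.star (FractionalIdeal.spanSingleton D⁰ i * N) := (s.star_smul i hi0 N hN).symm
  have h3 : FractionalIdeal.spanSingleton D⁰ i * N ≤ M * N :=
    mul_le_mul_left (FractionalIdeal.spanSingleton_le_iff_mem.mpr hi) N
  have h4 : s.star (FractionalIdeal.spanSingleton D⁰ i * N) ≤ s.star (M * N) :=
    s.star_mono _ _ (mul_ne_zero' (FractionalIdeal.spanSingleton_ne_zero_iff.mpr hi0) hN)
      (mul_ne_zero' hM hN) h3
  exact h4 (h2 ▸ h1)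

theorem star_mul_star {M N : FractionalIdeal D⁰ K} (hM : M ≠ 0) (hN : N ≠ 0) :
    s.star (M * s.star N) = s.star (M * N) := by
  apply le_antisymm
  · have := s.star_mono _ _ (mul_ne_zero' hM (star_ne_zero s hN))
      (star_ne_zero s (mul_ne_zero' hM hN)) (mul_star_le s hM hN)
    rwa [s.star_star _ (mul_ne_zero' hM hN)] at this
  · exact s.star_mono _ _ (mul_ne_zero' hM hN) (mul_ne_zero' hM (star_ne_zero s hN))
      (mul_le_mul_right (s.le_star N hN) M)

theorem star_star_mul_star {M N : FractionalIdeal D⁰ K} (hM : M ≠ 0) (hN : N ≠ 0) :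
    s.star (s.star M * s.star N) = s.star (M * N) := by
  rw [mul_comm, star_mul_star s (star_ne_zero s hN) hM, mul_comm, star_mul_star s hM hN]

/-- multiplying by an ideal of star 1 does not change the star -/
theorem star_mul_one {M N : FractionalIdeal D⁰ K} (hM : M ≠ 0) (hN : N ≠ 0)
    (h : s.star N = 1) : s.star (M * N) = s.star M := by
  rw [← star_mul_star s hM hN, h, mul_one]

/-- star of `1/I` is itself -/
theorem star_one_div {I : FractionalIdeal D⁰ K} (hI : I ≠ 0) :
    s.star (1 / I) = 1 / I := by
  have h0 : (1 : FractionalIdeal D⁰ K) / I ≠ 0 := one_div_ne_zero' hI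
  apply le_antisymm
  · rw [FractionalIdeal.le_div_iff_mul_le hI]
    calc s.star (1 / I) * I ≤ s.star ((1 / I) * I) := by
          rw [mul_comm (s.star ((1:FractionalIdeal D⁰ K) / I)) I, mul_comm ((1:FractionalIdeal D⁰ K)/I) I]
          exact mul_star_le s hI h0
      _ ≤ s.star 1 := s.star_mono _ _ (mul_ne_zero' h0 hI) one_ne_zero
          (by rw [mul_comm]; exact FractionalIdeal.mul_one_div_le_one)
      _ = 1 := s.star_one
  · exact s.le_star _ h0

/-- a fractional ideal with a "star-inverse" -/
def SInv (I : FractionalIdeal D⁰ K) : Prop := s.star (I * (1 / I)) = 1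

theorem sInv_spanSingleton {x : K} (hx : x ≠ 0) :
    SInv s (FractionalIdeal.spanSingleton D⁰ x) := by
  unfold SInv
  rw [FractionalIdeal.one_div_spanSingleton, FractionalIdeal.spanSingleton_mul_spanSingleton,
    mul_inv_cancel₀ hx, FractionalIdeal.spanSingleton_one, s.star_one]


theorem star_eq_one_of_le {G G' : FractionalIdeal D⁰ K} (hG : G ≠ 0) (h : G ≤ G')
    (hG' : G' ≤ 1) (h1 : s.star G = 1) : s.star G' = 1 := by
  have hG'0 : G' ≠ 0 := fun h0 => hG (le_antisymm (h0 ▸ h) (zero_le _))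
  apply le_antisymm (star_le_one s hG'0 hG')
  calc (1 : FractionalIdeal D⁰ K) = s.star G := h1.symm
    _ ≤ s.star G' := s.star_mono _ _ hG hG'0 h

theorem one_div_le_one_div {A B : FractionalIdeal D⁰ K} (hA : A ≠ 0) (h : A ≤ B) :
    1 / B ≤ 1 / A := by
  rw [FractionalIdeal.le_div_iff_mul_le hA]
  calc 1 / B * A ≤ 1 / B * B := mul_le_mul_right h _
    _ ≤ 1 := by rw [mul_comm]; exact FractionalIdeal.mul_one_div_le_one

theorem one_div_star {M : FractionalIdeal D⁰ K} (hM : M ≠ 0) :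
    1 / s.star M = 1 / M := by
  apply le_antisymm
  · exact one_div_le_one_div hM (s.le_star M hM)
  · rw [FractionalIdeal.le_div_iff_mul_le (star_ne_zero s hM)]
    calc 1 / M * s.star M ≤ s.star (1 / M * M) := mul_star_le s (one_div_ne_zero' hM) hM
      _ ≤ s.star 1 := s.star_mono _ _ (mul_ne_zero' (one_div_ne_zero' hM) hM) one_ne_zero
          (by rw [mul_comm]; exact FractionalIdeal.mul_one_div_le_one)
      _ = 1 := s.star_one

theorem sInv_mul {A B : FractionalIdeal D⁰ K} (hA : A ≠ 0) (hB : B ≠ 0)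
    (ha : SInv s A) (hb : SInv s B) : SInv s (A * B) := by
  have hAB : A * B ≠ 0 := mul_ne_zero' hA hB
  have hdiv : (1 / A) * (1 / B) ≤ 1 / (A * B) := by
    rw [FractionalIdeal.le_div_iff_mul_le hAB]
    calc 1 / A * (1 / B) * (A * B) = A * (1 / A) * (B * (1 / B)) := by ring
      _ ≤ A * (1 / A) * 1 := mul_le_mul_right FractionalIdeal.mul_one_div_le_one _
      _ = A * (1 / A) := mul_one _
      _ ≤ 1 := FractionalIdeal.mul_one_div_le_one
  have hzeta : s.star ((A * (1 / A)) * (B * (1 / B))) = 1 := by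
    rw [← star_star_mul_star s (mul_ne_zero' hA (one_div_ne_zero' hA))
      (mul_ne_zero' hB (one_div_ne_zero' hB)), ha, hb, one_mul, s.star_one]
  unfold SInv
  apply le_antisymm
  · exact star_le_one s (mul_ne_zero' hAB (one_div_ne_zero' hAB))
      FractionalIdeal.mul_one_div_le_one
  · calc (1 : FractionalIdeal D⁰ K) = s.star ((A * (1 / A)) * (B * (1 / B))) := hzeta.symm
      _ ≤ s.star (A * B * (1 / (A * B))) := by
          apply s.star_mono _ _
            (mul_ne_zero' (mul_ne_zero' hA (one_div_ne_zero' hA))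
              (mul_ne_zero' hB (one_div_ne_zero' hB)))
            (mul_ne_zero' hAB (one_div_ne_zero' hAB))
          calc A * (1 / A) * (B * (1 / B)) = (A * B) * ((1 / A) * (1 / B)) := by ring
            _ ≤ (A * B) * (1 / (A * B)) := mul_le_mul_right hdiv _


theorem sInv_star {M : FractionalIdeal D⁰ K} (hM : M ≠ 0) (h : SInv s M) :
    SInv s (s.star M) := by
  unfold SInv
  rw [one_div_star s hM, mul_comm, star_mul_star s (one_div_ne_zero' hM) hM, mul_comm]
  exact h

theorem star_sup_star {A B : FractionalIdeal D⁰ K} (hA : A ≠ 0) (hB : B ≠ 0) :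
    s.star (A ⊔ s.star B) = s.star (A ⊔ B) := by
  have hAB : A ⊔ B ≠ 0 := sup_ne_zero_left hA
  have hAB' : A ⊔ s.star B ≠ 0 := sup_ne_zero_left hA
  apply le_antisymm
  · have hle : A ⊔ s.star B ≤ s.star (A ⊔ B) := by
      apply sup_le
      · exact le_trans le_sup_left (s.le_star _ hAB)
      · exact s.star_mono _ _ hB hAB le_sup_right
    have := s.star_mono _ _ hAB' (star_ne_zero s hAB) hle
    rwa [s.star_star _ hAB] at this
  · exact s.star_mono _ _ hAB hAB' (sup_le_sup_left (s.le_star _ hB) A)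

theorem star_sup_star₂ {A B : FractionalIdeal D⁰ K} (hA : A ≠ 0) (hB : B ≠ 0) :
    s.star (s.star A ⊔ s.star B) = s.star (A ⊔ B) := by
  rw [star_sup_star s (star_ne_zero s hA) hB, sup_comm, star_sup_star s hB hA, sup_comm]

theorem one_div_sup_star {A B : FractionalIdeal D⁰ K} (hA : A ≠ 0) (hB : B ≠ 0) :
    1 / (A ⊔ s.star B) = 1 / (A ⊔ B) := by
  have hAB : A ⊔ B ≠ 0 := sup_ne_zero_left hA
  have hAB' : A ⊔ s.star B ≠ 0 := sup_ne_zero_left hA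
  apply le_antisymm
  · exact one_div_le_one_div hAB (sup_le_sup_left (s.le_star _ hB) A)
  · rw [FractionalIdeal.le_div_iff_mul_le hAB']
    have hexp : 1 / (A ⊔ B) * (A ⊔ s.star B) = 1 / (A ⊔ B) * A ⊔ 1 / (A ⊔ B) * s.star B := by
      rw [sup_eq_add A (s.star B), mul_add]
      exact (sup_eq_add _ _).symm
    rw [hexp]
    apply sup_le
    · calc 1 / (A ⊔ B) * A ≤ 1 / (A ⊔ B) * (A ⊔ B) := mul_le_mul_right le_sup_left _
        _ ≤ 1 := by rw [mul_comm]; exact FractionalIdeal.mul_one_div_le_one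
    · calc 1 / (A ⊔ B) * s.star B ≤ s.star (1 / (A ⊔ B) * B) :=
          mul_star_le s (one_div_ne_zero' hAB) hB
        _ ≤ s.star 1 := by
            apply s.star_mono _ _ (mul_ne_zero' (one_div_ne_zero' hAB) hB) one_ne_zero
            calc 1 / (A ⊔ B) * B ≤ 1 / (A ⊔ B) * (A ⊔ B) :=
                mul_le_mul_right le_sup_right _
              _ ≤ 1 := by rw [mul_comm]; exact FractionalIdeal.mul_one_div_le_one
        _ = 1 := s.star_one

theorem mul_sup' (I A B : FractionalIdeal D⁰ K) : I * (A ⊔ B) = I * A ⊔ I * B := by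
  rw [sup_eq_add, sup_eq_add, mul_add]

theorem sup_mul' (A B I : FractionalIdeal D⁰ K) : (A ⊔ B) * I = A * I ⊔ B * I := by
  rw [mul_comm, mul_sup', mul_comm I A, mul_comm I B]

theorem sup_inf_modular {A B C : FractionalIdeal D⁰ K} (h : A ≤ C) :
    (A ⊔ B) ⊓ C = A ⊔ (B ⊓ C) := by
  apply FractionalIdeal.coeToSubmodule_injective
  simp only [FractionalIdeal.coe_inf, FractionalIdeal.coe_sup]
  exact sup_inf_assoc_of_le _ (FractionalIdeal.coe_le_coe.mpr h)

/-- the main cancellation trick: a star-invertible ideal may be cancelled inside stars -/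
theorem le_star_of_mul_le {Z M W : FractionalIdeal D⁰ K} (hZ : Z ≠ 0) (hM : M ≠ 0)
    (hW : W ≠ 0) (hInv : SInv s M) (h : Z * M ≤ s.star (W * M)) : Z ≤ s.star W := by
  have hMM : M * (1 / M) ≠ 0 := mul_ne_zero' hM (one_div_ne_zero' hM)
  have h1 : s.star Z = s.star (Z * (M * (1 / M))) := (star_mul_one s hZ hMM hInv).symm
  have h2 : Z * (M * (1 / M)) = (Z * M) * (1 / M) := by ring
  have h3 : (Z * M) * (1 / M) ≤ s.star (W * M) * (1 / M) :=
    mul_le_mul_left h _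
  have h4 : s.star (s.star (W * M) * (1 / M)) = s.star ((W * M) * (1 / M)) := by
    rw [mul_comm (s.star (W * M)) (1 / M), star_mul_star s (one_div_ne_zero' hM)
      (mul_ne_zero' hW hM), mul_comm]
  have h5 : s.star ((W * M) * (1 / M)) = s.star W := by
    have : (W * M) * (1 / M) = W * (M * (1 / M)) := by ring
    rw [this]
    exact star_mul_one s hW hMM hInv
  calc Z ≤ s.star Z := s.le_star Z hZ
    _ = s.star (Z * (M * (1 / M))) := h1
    _ = s.star ((Z * M) * (1 / M)) := by rw [h2]
    _ ≤ s.star (s.star (W * M) * (1 / M)) := by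
        apply s.star_mono _ _ _ _ h3
        · rw [← h2]; exact mul_ne_zero' hZ hMM
        · exact mul_ne_zero' (star_ne_zero s (mul_ne_zero' hW hM)) (one_div_ne_zero' hM)
    _ = s.star W := by rw [h4, h5]


theorem mul_le_one' {A B : FractionalIdeal D⁰ K} (hA : A ≤ 1) (hB : B ≤ 1) : A * B ≤ 1 := by
  calc A * B ≤ A * 1 := mul_le_mul_right hB _
    _ = A := mul_one _
    _ ≤ 1 := hA

theorem mul_le_mul_right' {A B : FractionalIdeal D⁰ K} (h : A ≤ B) (C : FractionalIdeal D⁰ K) :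
    A * C ≤ B * C := mul_le_mul_left h C

theorem mul_le_mul_left' {A B : FractionalIdeal D⁰ K} (h : A ≤ B) (C : FractionalIdeal D⁰ K) :
    C * A ≤ C * B := mul_le_mul_right h C

theorem star_one_mul_star_one {A B : FractionalIdeal D⁰ K} (hA : A ≠ 0) (hB : B ≠ 0)
    (h1 : s.star A = 1) (h2 : s.star B = 1) : s.star (A * B) = 1 := by
  rw [← star_star_mul_star s hA hB, h1, h2, one_mul, s.star_one]

theorem le_of_mul_one_div_le_one {Z α : FractionalIdeal D⁰ K} (hZ : Z ≠ 0) (hα : α ≠ 0)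
    (hαs : s.star α = α) (hαI : SInv s α) (h : Z * (1 / α) ≤ 1) : Z ≤ α := by
  have hαα : α * (1 / α) ≠ 0 := mul_ne_zero' hα (one_div_ne_zero' hα)
  calc Z ≤ s.star Z := s.le_star Z hZ
    _ = s.star (Z * (α * (1 / α))) := (star_mul_one s hZ hαα hαI).symm
    _ = s.star ((Z * (1 / α)) * α) := by ring_nf
    _ ≤ s.star (1 * α) := by
        apply s.star_mono _ _ _ (by rw [one_mul]; exact hα) (mul_le_mul_right' h α)
        have : Z * (1 / α) * α = Z * (α * (1 / α)) := by ring
        rw [this]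
        exact mul_ne_zero' hZ hαα
    _ = α := by rw [one_mul, hαs]

section CoprimePair

variable {p q : FractionalIdeal D⁰ K}

/-- the coprimality property of the pair -/
def Cop (s : StarOperation D K) (p q : FractionalIdeal D⁰ K) : Prop :=
  ∀ Z : FractionalIdeal D⁰ K, Z ≠ 0 → Z * p ≤ 1 → Z * q ≤ 1 → Z ≤ 1

theorem coF3 (hq1 : q ≤ 1) (hco : Cop s p q) {M : FractionalIdeal D⁰ K} (hM : M ≠ 0)
    (hq0 : q ≠ 0) (h2 : M * q * q ≤ 1) (h1 : M * p ≤ 1) : M ≤ 1 := by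
  have hW : M * q ≤ 1 := by
    apply hco (M * q) (mul_ne_zero' hM hq0)
    · calc M * q * p = M * p * q := by ring
        _ ≤ 1 * q := mul_le_mul_left h1 _
        _ = q := one_mul q
        _ ≤ 1 := hq1
    · exact h2
  exact hco M hM h1 hW

theorem coF4 (hp0 : p ≠ 0) (hq0 : q ≠ 0) (hp1 : p ≤ 1) (hq1 : q ≤ 1)
    (hpI : SInv s p) (hqI : SInv s q) (hco : Cop s p q) :
    (q * q) ⊓ p ≤ s.star (p * (q * q)) := by
  set Z := (q * q) ⊓ p with hZdef
  by_cases hZ0 : Z = 0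
  · rw [hZ0]; exact zero_le _
  have hq2 : q * q ≠ 0 := mul_ne_zero' hq0 hq0
  have hZq : Z ≤ q * q := inf_le_left
  have hZp : Z ≤ p := inf_le_right
  set M := Z * (1 / p) * ((1 / q) * (1 / q)) with hMdef
  have hM0 : M ≠ 0 := mul_ne_zero' (mul_ne_zero' hZ0 (one_div_ne_zero' hp0))
    (mul_ne_zero' (one_div_ne_zero' hq0) (one_div_ne_zero' hq0))
  have hq1q : (1 / q) * q ≤ 1 := by rw [mul_comm]; exact FractionalIdeal.mul_one_div_le_one
  have hZpd : Z * (1 / p) ≤ 1 := by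
    calc Z * (1 / p) ≤ p * (1 / p) := mul_le_mul_left hZp _
      _ ≤ 1 := FractionalIdeal.mul_one_div_le_one
  have hMqq : M * q * q ≤ 1 := by
    calc M * q * q = (Z * (1 / p)) * (((1 / q) * q) * ((1 / q) * q)) := by ring
      _ ≤ 1 := mul_le_one' hZpd (mul_le_one' hq1q hq1q)
  have hMp : M * p ≤ 1 := by
    have hZqq : Z * ((1 / q) * (1 / q)) ≤ 1 := by
      calc Z * ((1 / q) * (1 / q)) ≤ (q * q) * ((1 / q) * (1 / q)) :=
          mul_le_mul_left hZq _
        _ = ((1 / q) * q) * ((1 / q) * q) := by ring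
        _ ≤ 1 := mul_le_one' hq1q hq1q
    calc M * p = (Z * ((1 / q) * (1 / q))) * ((1 / p) * p) := by ring
      _ ≤ 1 := mul_le_one' hZqq (by rw [mul_comm]; exact FractionalIdeal.mul_one_div_le_one)
  have hM1 : M ≤ 1 := coF3 s hq1 hco hM0 hq0 hMqq hMp
  -- ζ and final absorption
  have hζq : s.star ((q * (1 / q)) * (q * (1 / q))) = 1 :=
    star_one_mul_star_one s (mul_ne_zero' hq0 (one_div_ne_zero' hq0))
      (mul_ne_zero' hq0 (one_div_ne_zero' hq0)) hqI hqI
  have hζ : s.star ((p * (1 / p)) * ((q * (1 / q)) * (q * (1 / q)))) = 1 :=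
    star_one_mul_star_one s (mul_ne_zero' hp0 (one_div_ne_zero' hp0))
      (mul_ne_zero' (mul_ne_zero' hq0 (one_div_ne_zero' hq0))
        (mul_ne_zero' hq0 (one_div_ne_zero' hq0))) hpI hζq
  have hζ0 : (p * (1 / p)) * ((q * (1 / q)) * (q * (1 / q))) ≠ 0 :=
    mul_ne_zero' (mul_ne_zero' hp0 (one_div_ne_zero' hp0))
      (mul_ne_zero' (mul_ne_zero' hq0 (one_div_ne_zero' hq0))
        (mul_ne_zero' hq0 (one_div_ne_zero' hq0)))
  calc Z ≤ s.star Z := s.le_star Z hZ0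
    _ = s.star (Z * ((p * (1 / p)) * ((q * (1 / q)) * (q * (1 / q))))) :=
        (star_mul_one s hZ0 hζ0 hζ).symm
    _ = s.star (M * (p * (q * q))) := by
        have : Z * ((p * (1 / p)) * ((q * (1 / q)) * (q * (1 / q)))) = M * (p * (q * q)) := by
          rw [hMdef]; ring
        rw [this]
    _ ≤ s.star (1 * (p * (q * q))) := by
        apply s.star_mono _ _ _ _ (mul_le_mul_right' hM1 _)
        · have : M * (p * (q * q)) = Z * ((p * (1 / p)) * ((q * (1 / q)) * (q * (1 / q)))) := by
            rw [hMdef]; ring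
          rw [this]
          exact mul_ne_zero' hZ0 hζ0
        · rw [one_mul]; exact mul_ne_zero' hp0 hq2
    _ = s.star (p * (q * q)) := by rw [one_mul]

theorem coF4' (hp0 : p ≠ 0) (hq0 : q ≠ 0) (hp1 : p ≤ 1) (hq1 : q ≤ 1)
    (hpI : SInv s p) (hqI : SInv s q) (hco : Cop s p q) :
    q ⊓ p ≤ s.star (p * q) := by
  set Z := q ⊓ p with hZdef
  by_cases hZ0 : Z = 0
  · rw [hZ0]; exact zero_le _
  have hZq : Z ≤ q := inf_le_left
  have hZp : Z ≤ p := inf_le_right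
  set M := Z * (1 / p) * (1 / q) with hMdef
  have hM0 : M ≠ 0 := mul_ne_zero' (mul_ne_zero' hZ0 (one_div_ne_zero' hp0))
    (one_div_ne_zero' hq0)
  have hq1q : (1 / q) * q ≤ 1 := by rw [mul_comm]; exact FractionalIdeal.mul_one_div_le_one
  have hZpd : Z * (1 / p) ≤ 1 := by
    calc Z * (1 / p) ≤ p * (1 / p) := mul_le_mul_left hZp _
      _ ≤ 1 := FractionalIdeal.mul_one_div_le_one
  have hMq : M * q ≤ 1 := by
    calc M * q = (Z * (1 / p)) * ((1 / q) * q) := by ring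
      _ ≤ 1 := mul_le_one' hZpd hq1q
  have hMp : M * p ≤ 1 := by
    have hZqq : Z * (1 / q) ≤ 1 := by
      calc Z * (1 / q) ≤ q * (1 / q) := mul_le_mul_left hZq _
        _ ≤ 1 := FractionalIdeal.mul_one_div_le_one
    calc M * p = (Z * (1 / q)) * ((1 / p) * p) := by ring
      _ ≤ 1 := mul_le_one' hZqq (by rw [mul_comm]; exact FractionalIdeal.mul_one_div_le_one)
  have hM1 : M ≤ 1 := hco M hM0 hMp hMq
  have hζ : s.star ((p * (1 / p)) * (q * (1 / q))) = 1 :=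
    star_one_mul_star_one s (mul_ne_zero' hp0 (one_div_ne_zero' hp0))
      (mul_ne_zero' hq0 (one_div_ne_zero' hq0)) hpI hqI
  have hζ0 : (p * (1 / p)) * (q * (1 / q)) ≠ 0 :=
    mul_ne_zero' (mul_ne_zero' hp0 (one_div_ne_zero' hp0))
      (mul_ne_zero' hq0 (one_div_ne_zero' hq0))
  calc Z ≤ s.star Z := s.le_star Z hZ0
    _ = s.star (Z * ((p * (1 / p)) * (q * (1 / q)))) := (star_mul_one s hZ0 hζ0 hζ).symm
    _ = s.star (M * (p * q)) := by
        have : Z * ((p * (1 / p)) * (q * (1 / q))) = M * (p * q) := by rw [hMdef]; ring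
        rw [this]
    _ ≤ s.star (1 * (p * q)) := by
        apply s.star_mono _ _ _ _ (mul_le_mul_right' hM1 _)
        · have : M * (p * q) = Z * ((p * (1 / p)) * (q * (1 / q))) := by rw [hMdef]; ring
          rw [this]
          exact mul_ne_zero' hZ0 hζ0
        · rw [one_mul]; exact mul_ne_zero' hp0 hq0
    _ = s.star (p * q) := by rw [one_mul]

end CoprimePair


section L1L2

variable {p q : FractionalIdeal D⁰ K}

/-- abbreviation for stability -/
def Stab (s : StarOperation D K) : Prop :=
  ∀ I J : FractionalIdeal D⁰ K, I ≠ 0 → J ≠ 0 → s.star (I ⊓ J) = s.star I ⊓ s.star J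

theorem lemL1 (hst : Stab s) (hp0 : p ≠ 0) (hq0 : q ≠ 0) (hp1 : p ≤ 1) (hq1 : q ≤ 1)
    (hqs : s.star q = q) (hpI : SInv s p) (hqI : SInv s q) (hco : Cop s p q)
    {z : FractionalIdeal D⁰ K} (hz0 : z ≠ 0) (hz1 : z ≤ 1)
    (hzq : z * q ≤ s.star (q * q ⊔ p)) : z ≤ s.star (p ⊔ q) := by
  have hqq0 : q * q ≠ 0 := mul_ne_zero' hq0 hq0
  have hsum0 : q * q ⊔ p ≠ 0 := sup_ne_zero_left hqq0
  have hqql : q * q ≤ q := by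
    calc q * q ≤ 1 * q := mul_le_mul_right' hq1 q
      _ = q := one_mul q
  -- step 1 : z * q ≤ star ((q*q ⊔ p) ⊓ q)
  have h1 : z * q ≤ s.star ((q * q ⊔ p) ⊓ q) := by
    rw [hst _ _ hsum0 hq0, hqs]
    refine le_inf hzq ?_
    calc z * q ≤ 1 * q := mul_le_mul_right' hz1 q
      _ = q := one_mul q
  -- step 2 : modularity
  have h2 : (q * q ⊔ p) ⊓ q = q * q ⊔ (p ⊓ q) := sup_inf_modular hqql
  -- step 3 : p ⊓ q ≤ star (q * p) so the whole thing is ≤ star (q * (q ⊔ p))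
  have h3 : q * q ⊔ (p ⊓ q) ≤ s.star (q * q ⊔ q * p) := by
    apply sup_le
    · exact le_trans le_sup_left (s.le_star _ (sup_ne_zero_left hqq0))
    · calc p ⊓ q = q ⊓ p := inf_comm p q
        _ ≤ s.star (p * q) := coF4' s hp0 hq0 hp1 hq1 hpI hqI hco
        _ = s.star (q * p) := by rw [mul_comm]
        _ ≤ s.star (q * q ⊔ q * p) := s.star_mono _ _ (mul_ne_zero' hq0 hp0)
            (sup_ne_zero_left hqq0) le_sup_right
  have h4 : s.star ((q * q ⊔ p) ⊓ q) ≤ s.star (q * (q ⊔ p)) := by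
    have hiz : (q * q ⊔ p) ⊓ q ≠ 0 := by
      rw [h2]; exact sup_ne_zero_left hqq0
    have := s.star_mono _ _ hiz (star_ne_zero s (sup_ne_zero_left hqq0)) (h2 ▸ h3)
    rwa [s.star_star _ (sup_ne_zero_left hqq0), ← mul_sup'] at this
  -- step 4 : cancel q
  have h5 : z * q ≤ s.star ((q ⊔ p) * q) := by
    rw [mul_comm (q ⊔ p) q]
    exact le_trans h1 h4
  have := le_star_of_mul_le s hz0 hq0 (sup_ne_zero_left hq0) hqI h5
  rwa [sup_comm] at this

theorem lemL2 (hst : Stab s) (hp0 : p ≠ 0) (hq0 : q ≠ 0) (hp1 : p ≤ 1) (hq1 : q ≤ 1)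
    (hps : s.star p = p) (hpI : SInv s p) (hqI : SInv s q) (hco : Cop s p q)
    {z : FractionalIdeal D⁰ K} (hz0 : z ≠ 0) (hz1 : z ≤ 1)
    (hzp : z * p ≤ s.star ((p ⊔ q) * (p ⊔ q))) : z ≤ s.star (p ⊔ q) := by
  have hU0 : p ⊔ q ≠ 0 := sup_ne_zero_left hp0
  have hUU0 : (p ⊔ q) * (p ⊔ q) ≠ 0 := mul_ne_zero' hU0 hU0
  have hqq0 : q * q ≠ 0 := mul_ne_zero' hq0 hq0
  have hqql : q * q ≤ q := by
    calc q * q ≤ 1 * q := mul_le_mul_right' hq1 q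
      _ = q := one_mul q
  have hA_le : p * (p ⊔ q) ⊔ q * p ≤ p := by
    apply sup_le
    · calc p * (p ⊔ q) ≤ p * 1 := mul_le_mul_left' (sup_le hp1 hq1) p
        _ = p := mul_one p
    · calc q * p ≤ 1 * p := mul_le_mul_right' hq1 p
        _ = p := one_mul p
  have hexp : (p ⊔ q) * (p ⊔ q) = (p * (p ⊔ q) ⊔ q * p) ⊔ q * q := by
    rw [sup_mul' p q (p ⊔ q), mul_sup' q p q]
    exact (sup_assoc _ _ _).symm
  have h1 : z * p ≤ s.star (((p * (p ⊔ q) ⊔ q * p) ⊔ q * q) ⊓ p) := by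
    rw [hst _ _ (by rw [← hexp]; exact hUU0) hp0, hps]
    refine le_inf (by rw [← hexp]; exact hzp) ?_
    calc z * p ≤ 1 * p := mul_le_mul_right' hz1 p
      _ = p := one_mul p
  have h2 : ((p * (p ⊔ q) ⊔ q * p) ⊔ q * q) ⊓ p = (p * (p ⊔ q) ⊔ q * p) ⊔ (q * q ⊓ p) :=
    sup_inf_modular hA_le
  have hP0 : p * (p ⊔ q) ≠ 0 := mul_ne_zero' hp0 hU0
  have h3 : (p * (p ⊔ q) ⊔ q * p) ⊔ (q * q ⊓ p) ≤ s.star (p * (p ⊔ q)) := by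
    apply sup_le
    · apply sup_le
      · exact s.le_star _ hP0
      · calc q * p = p * q := mul_comm q p
          _ ≤ p * (p ⊔ q) := mul_le_mul_left' le_sup_right p
          _ ≤ s.star (p * (p ⊔ q)) := s.le_star _ hP0
    · calc q * q ⊓ p ≤ s.star (p * (q * q)) := coF4 s hp0 hq0 hp1 hq1 hpI hqI hco
        _ ≤ s.star (p * (p ⊔ q)) := by
            apply s.star_mono _ _ (mul_ne_zero' hp0 hqq0) hP0
            exact mul_le_mul_left' (le_trans hqql le_sup_right) p
  have h4 : s.star (((p * (p ⊔ q) ⊔ q * p) ⊔ q * q) ⊓ p) ≤ s.star (p * (p ⊔ q)) := by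
    have hiz : ((p * (p ⊔ q) ⊔ q * p) ⊔ q * q) ⊓ p ≠ 0 := by
      rw [← hexp]; exact inf_ne_zero' hUU0 hp0
    have := s.star_mono _ _ hiz (star_ne_zero s hP0) (h2 ▸ h3)
    rwa [s.star_star _ hP0] at this
  have h5 : z * p ≤ s.star ((p ⊔ q) * p) := by
    rw [mul_comm (p ⊔ q) p]
    exact le_trans h1 h4
  exact le_star_of_mul_le s hz0 hp0 hU0 hpI h5

end L1L2


section FactA

theorem factA (hsharp : IsSharpOp (D := D) (K := K) s.star) {X : FractionalIdeal D⁰ K}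
    (hX0 : X ≠ 0) (hX1 : X ≤ 1) (hXv : 1 / (1 / X) ≤ X) : SInv s X := by
  obtain ⟨x₀, hx₀X, hx₀⟩ := exists_mem_ne_zero hX0
  have hx₀1 : x₀ ∈ (1 : FractionalIdeal D⁰ K) := hX1 hx₀X
  obtain ⟨c, hc⟩ := (FractionalIdeal.mem_one_iff _).mp hx₀1
  have hc0 : c ≠ 0 := by
    intro h
    apply hx₀
    rw [← hc, h]
    exact map_zero _
  obtain ⟨XI, hXI⟩ := FractionalIdeal.le_one_iff_exists_coeIdeal.mp hX1
  have hdX0 : (1 : FractionalIdeal D⁰ K) / X ≠ 0 := one_div_ne_zero' hX0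
  have hsx₀ : FractionalIdeal.spanSingleton D⁰ x₀ ≠ 0 :=
    FractionalIdeal.spanSingleton_ne_zero_iff.mpr hx₀
  set Bf : FractionalIdeal D⁰ K := FractionalIdeal.spanSingleton D⁰ x₀ * (1 / X) with hBfdef
  have hBf0 : Bf ≠ 0 := mul_ne_zero' hsx₀ hdX0
  have hBf1 : Bf ≤ 1 := by
    calc Bf ≤ X * (1 / X) :=
        mul_le_mul_right' (FractionalIdeal.spanSingleton_le_iff_mem.mpr hx₀X) _
      _ ≤ 1 := FractionalIdeal.mul_one_div_le_one
  obtain ⟨BI, hBI⟩ := FractionalIdeal.le_one_iff_exists_coeIdeal.mp hBf1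
  have hXI0 : XI ≠ 0 := by
    intro h
    apply hX0
    rw [← hXI, h]
    exact FractionalIdeal.coeIdeal_bot
  have hBI0 : BI ≠ 0 := by
    intro h
    apply hBf0
    rw [← hBI, h]
    exact FractionalIdeal.coeIdeal_bot
  have hspan0 : Ideal.span {c} ≠ 0 := by
    rw [Ne, Ideal.zero_eq_bot, Ideal.span_singleton_eq_bot]
    exact hc0
  have hAB : XI * BI ≤ Ideal.span {c} := by
    rw [← FractionalIdeal.coeIdeal_le_coeIdeal K, FractionalIdeal.coeIdeal_mul, hXI, hBI,
      FractionalIdeal.coeIdeal_span_singleton, hc]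
    calc X * Bf = FractionalIdeal.spanSingleton D⁰ x₀ * (X * (1 / X)) := by
          rw [hBfdef]; ring
      _ ≤ FractionalIdeal.spanSingleton D⁰ x₀ * 1 :=
          mul_le_mul_left' FractionalIdeal.mul_one_div_le_one _
      _ = FractionalIdeal.spanSingleton D⁰ x₀ := mul_one _
  obtain ⟨H, J, hH0, hJ0, hEq, hA, hB⟩ := hsharp (Ideal.span {c}) XI BI hspan0 hXI0 hBI0 hAB
  rw [FractionalIdeal.coeIdeal_span_singleton, hc, star_spanSingleton s hx₀] at hEq
  rw [hXI] at hA
  rw [hBI] at hB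
  have hHf0 : (H : FractionalIdeal D⁰ K) ≠ 0 := by
    intro h
    apply hH0
    rwa [← FractionalIdeal.coeIdeal_bot, FractionalIdeal.coeIdeal_inj,
      ← Ideal.zero_eq_bot] at h
  have hJf0 : (J : FractionalIdeal D⁰ K) ≠ 0 := by
    intro h
    apply hJ0
    rwa [← FractionalIdeal.coeIdeal_bot, FractionalIdeal.coeIdeal_inj,
      ← Ideal.zero_eq_bot] at h
  have hHJ0 : (H : FractionalIdeal D⁰ K) * (J : FractionalIdeal D⁰ K) ≠ 0 :=
    mul_ne_zero' hHf0 hJf0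
  -- X * J ≤ span x₀
  have h1 : X * (J : FractionalIdeal D⁰ K) ≤ FractionalIdeal.spanSingleton D⁰ x₀ := by
    calc X * (J : FractionalIdeal D⁰ K) ≤ s.star (H : FractionalIdeal D⁰ K) * J :=
        mul_le_mul_right' hA _
      _ = (J : FractionalIdeal D⁰ K) * s.star (H : FractionalIdeal D⁰ K) := mul_comm _ _
      _ ≤ s.star ((J : FractionalIdeal D⁰ K) * H) := mul_star_le s hJf0 hHf0
      _ = s.star ((H : FractionalIdeal D⁰ K) * J) := by rw [mul_comm]
      _ = FractionalIdeal.spanSingleton D⁰ x₀ := hEq.symm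
  -- J ≤ Bf
  have hJle : (J : FractionalIdeal D⁰ K) ≤ Bf := by
    intro z hz
    have hzX : ∀ y ∈ X, x₀⁻¹ * z * y ∈ (1 : FractionalIdeal D⁰ K) := by
      intro y hy
      have hyz : y * z ∈ X * (J : FractionalIdeal D⁰ K) := FractionalIdeal.mul_mem_mul hy hz
      obtain ⟨d, hd⟩ := (FractionalIdeal.mem_spanSingleton _).mp (h1 hyz)
      have : x₀⁻¹ * z * y = algebraMap D K d := by
        calc x₀⁻¹ * z * y = x₀⁻¹ * (y * z) := by ring
          _ = x₀⁻¹ * (d • x₀) := by rw [hd]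
          _ = x₀⁻¹ * (algebraMap D K d * x₀) := by rw [Algebra.smul_def]
          _ = algebraMap D K d * (x₀⁻¹ * x₀) := by ring
          _ = algebraMap D K d := by rw [inv_mul_cancel₀ hx₀, mul_one]
      rw [this]
      exact FractionalIdeal.coe_mem_one _ _
    have hmem : x₀⁻¹ * z ∈ (1 : FractionalIdeal D⁰ K) / X := by
      rw [FractionalIdeal.mem_div_iff_of_ne_zero hX0]
      exact hzX
    have : z = x₀ * (x₀⁻¹ * z) := by field_simp
    rw [hBfdef, this]
    exact FractionalIdeal.mul_mem_mul (FractionalIdeal.mem_spanSingleton_self _ _) hmem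
  -- star J = Bf
  have hJstar : s.star (J : FractionalIdeal D⁰ K) = Bf := by
    apply le_antisymm
    · have hstarBf : s.star Bf = Bf := by
        rw [hBfdef, s.star_smul x₀ hx₀ _ hdX0, star_one_div s hX0]
      calc s.star (J : FractionalIdeal D⁰ K) ≤ s.star Bf :=
          s.star_mono _ _ hJf0 hBf0 hJle
        _ = Bf := hstarBf
    · exact hB
  -- H ≤ X
  have hinvx : FractionalIdeal.spanSingleton D⁰ x₀⁻¹ * FractionalIdeal.spanSingleton D⁰ x₀
      = 1 := by
    rw [FractionalIdeal.spanSingleton_mul_spanSingleton, inv_mul_cancel₀ hx₀,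
      FractionalIdeal.spanSingleton_one]
  have h2 : (H : FractionalIdeal D⁰ K) * Bf ≤ FractionalIdeal.spanSingleton D⁰ x₀ := by
    calc (H : FractionalIdeal D⁰ K) * Bf
        = (H : FractionalIdeal D⁰ K) * s.star (J : FractionalIdeal D⁰ K) := by rw [hJstar]
      _ ≤ s.star ((H : FractionalIdeal D⁰ K) * (J : FractionalIdeal D⁰ K)) :=
          mul_star_le s hHf0 hJf0
      _ = FractionalIdeal.spanSingleton D⁰ x₀ := hEq.symm
  have e : FractionalIdeal.spanSingleton D⁰ x₀⁻¹ * ((H : FractionalIdeal D⁰ K) * Bf)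
      = (H : FractionalIdeal D⁰ K) * (1 / X) := by
    rw [hBfdef]
    calc FractionalIdeal.spanSingleton D⁰ x₀⁻¹
          * ((H : FractionalIdeal D⁰ K) * (FractionalIdeal.spanSingleton D⁰ x₀ * (1 / X)))
        = (FractionalIdeal.spanSingleton D⁰ x₀⁻¹ * FractionalIdeal.spanSingleton D⁰ x₀)
          * ((H : FractionalIdeal D⁰ K) * (1 / X)) := by ring
      _ = (H : FractionalIdeal D⁰ K) * (1 / X) := by rw [hinvx, one_mul]
  have h3 : (H : FractionalIdeal D⁰ K) * (1 / X) ≤ 1 := by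
    calc (H : FractionalIdeal D⁰ K) * (1 / X)
        = FractionalIdeal.spanSingleton D⁰ x₀⁻¹ * ((H : FractionalIdeal D⁰ K) * Bf) := e.symm
      _ ≤ FractionalIdeal.spanSingleton D⁰ x₀⁻¹ * FractionalIdeal.spanSingleton D⁰ x₀ :=
          mul_le_mul_left' h2 _
      _ = 1 := hinvx
  have hHX : (H : FractionalIdeal D⁰ K) ≤ X :=
    le_trans ((FractionalIdeal.le_div_iff_mul_le hdX0).mpr h3) hXv
  -- star (H * (1/X)) = 1
  have hHd0 : (H : FractionalIdeal D⁰ K) * (1 / X) ≠ 0 := mul_ne_zero' hHf0 hdX0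
  have e2 : s.star ((H : FractionalIdeal D⁰ K) * J)
      = FractionalIdeal.spanSingleton D⁰ x₀ * s.star ((H : FractionalIdeal D⁰ K) * (1 / X)) := by
    calc s.star ((H : FractionalIdeal D⁰ K) * (J : FractionalIdeal D⁰ K))
        = s.star ((H : FractionalIdeal D⁰ K) * s.star (J : FractionalIdeal D⁰ K)) :=
          (star_mul_star s hHf0 hJf0).symm
      _ = s.star ((H : FractionalIdeal D⁰ K) * Bf) := by rw [hJstar]
      _ = s.star (FractionalIdeal.spanSingleton D⁰ x₀
            * ((H : FractionalIdeal D⁰ K) * (1 / X))) := by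
          rw [hBfdef]
          have : (H : FractionalIdeal D⁰ K)
              * (FractionalIdeal.spanSingleton D⁰ x₀ * (1 / X))
              = FractionalIdeal.spanSingleton D⁰ x₀
              * ((H : FractionalIdeal D⁰ K) * (1 / X)) := by ring
          rw [this]
      _ = FractionalIdeal.spanSingleton D⁰ x₀
            * s.star ((H : FractionalIdeal D⁰ K) * (1 / X)) := s.star_smul x₀ hx₀ _ hHd0
  have hfinal : s.star ((H : FractionalIdeal D⁰ K) * (1 / X)) = 1 := by
    have hx₀eq : FractionalIdeal.spanSingleton D⁰ x₀
        = FractionalIdeal.spanSingleton D⁰ x₀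
          * s.star ((H : FractionalIdeal D⁰ K) * (1 / X)) := by
      rw [← e2]; exact hEq
    calc s.star ((H : FractionalIdeal D⁰ K) * (1 / X))
        = (FractionalIdeal.spanSingleton D⁰ x₀⁻¹ * FractionalIdeal.spanSingleton D⁰ x₀)
          * s.star ((H : FractionalIdeal D⁰ K) * (1 / X)) := by rw [hinvx, one_mul]
      _ = FractionalIdeal.spanSingleton D⁰ x₀⁻¹
          * (FractionalIdeal.spanSingleton D⁰ x₀
            * s.star ((H : FractionalIdeal D⁰ K) * (1 / X))) := by ring
      _ = FractionalIdeal.spanSingleton D⁰ x₀⁻¹ * FractionalIdeal.spanSingleton D⁰ x₀ := by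
          rw [← hx₀eq]
      _ = 1 := hinvx
  -- conclude
  unfold SInv
  apply le_antisymm
  · exact star_le_one s (mul_ne_zero' hX0 hdX0) FractionalIdeal.mul_one_div_le_one
  · calc (1 : FractionalIdeal D⁰ K) = s.star ((H : FractionalIdeal D⁰ K) * (1 / X)) :=
        hfinal.symm
      _ ≤ s.star (X * (1 / X)) := s.star_mono _ _ hHd0 (mul_ne_zero' hX0 hdX0)
          (mul_le_mul_right' hHX _)

end FactA


section TwoGen

variable {α β : FractionalIdeal D⁰ K}

set_option maxHeartbeats 1000000 in
theorem two_gen (hst : Stab s) (hsharp : IsSharpOp (D := D) (K := K) s.star)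
    (hα0 : α ≠ 0) (hβ0 : β ≠ 0) (hα1 : α ≤ 1) (hβ1 : β ≤ 1)
    (hαs : s.star α = α) (hβs : s.star β = β) (hαI : SInv s α) (hβI : SInv s β) :
    s.star ((α ⊔ β) * (1 / (α ⊔ β))) = 1 := by
  -- the meet X
  set X : FractionalIdeal D⁰ K := α ⊓ β with hXdef
  have hX0 : X ≠ 0 := inf_ne_zero' hα0 hβ0
  have hX1 : X ≤ 1 := le_trans inf_le_left hα1
  have hXle_α : X ≤ α := inf_le_left
  have hXle_β : X ≤ β := inf_le_right
  have hdX0 : (1 : FractionalIdeal D⁰ K) / X ≠ 0 := one_div_ne_zero' hX0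
  have hdα0 : (1 : FractionalIdeal D⁰ K) / α ≠ 0 := one_div_ne_zero' hα0
  have hdβ0 : (1 : FractionalIdeal D⁰ K) / β ≠ 0 := one_div_ne_zero' hβ0
  -- X is divisorial
  have hXv : 1 / (1 / X) ≤ X := by
    have hZ0 : (1 : FractionalIdeal D⁰ K) / (1 / X) ≠ 0 := one_div_ne_zero' hdX0
    apply le_inf
    · apply le_of_mul_one_div_le_one s hZ0 hα0 hαs hαI
      calc 1 / (1 / X) * (1 / α) ≤ 1 / (1 / X) * (1 / X) :=
          mul_le_mul_left' (one_div_le_one_div hX0 hXle_α) _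
        _ ≤ 1 := by rw [mul_comm]; exact FractionalIdeal.mul_one_div_le_one
    · apply le_of_mul_one_div_le_one s hZ0 hβ0 hβs hβI
      calc 1 / (1 / X) * (1 / β) ≤ 1 / (1 / X) * (1 / X) :=
          mul_le_mul_left' (one_div_le_one_div hX0 hXle_β) _
        _ ≤ 1 := by rw [mul_comm]; exact FractionalIdeal.mul_one_div_le_one
  have hXI : SInv s X := factA s hsharp hX0 hX1 hXv
  -- U and W
  set U : FractionalIdeal D⁰ K := α ⊔ β with hUdef
  have hU0 : U ≠ 0 := sup_ne_zero_left hα0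
  have hαU : α ≤ U := le_sup_left
  have hβU : β ≤ U := le_sup_right
  set W : FractionalIdeal D⁰ K := 1 / U with hWdef
  have hW0 : W ≠ 0 := one_div_ne_zero' hU0
  have hUW1 : U * W ≤ 1 := FractionalIdeal.mul_one_div_le_one
  have hαW1 : α * W ≤ 1 := le_trans (mul_le_mul_right' hαU W) hUW1
  have hβW1 : β * W ≤ 1 := le_trans (mul_le_mul_right' hβU W) hUW1
  -- ζ pieces
  have hζαβ : s.star ((α * (1 / α)) * (β * (1 / β))) = 1 :=
    star_one_mul_star_one s (mul_ne_zero' hα0 hdα0) (mul_ne_zero' hβ0 hdβ0) hαI hβI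
  have hζαβ0 : (α * (1 / α)) * (β * (1 / β)) ≠ 0 :=
    mul_ne_zero' (mul_ne_zero' hα0 hdα0) (mul_ne_zero' hβ0 hdβ0)
  have hζ3 : s.star ((X * (1 / X)) * ((α * (1 / α)) * (β * (1 / β)))) = 1 :=
    star_one_mul_star_one s (mul_ne_zero' hX0 hdX0) hζαβ0 hXI hζαβ
  have hζ30 : (X * (1 / X)) * ((α * (1 / α)) * (β * (1 / β))) ≠ 0 :=
    mul_ne_zero' (mul_ne_zero' hX0 hdX0) hζαβ0
  -- representation of W
  have hXab0 : X * (1 / α) * (1 / β) ≠ 0 := mul_ne_zero' (mul_ne_zero' hX0 hdα0) hdβ0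
  have hrep1 : X * (1 / α) * (1 / β) ≤ W := by
    rw [hWdef, FractionalIdeal.le_div_iff_mul_le hU0, hUdef, mul_sup']
    apply sup_le
    · have : X * (1 / α) * (1 / β) * α = (X * (1 / β)) * (α * (1 / α)) := by ring
      rw [this]
      apply mul_le_one'
      · calc X * (1 / β) ≤ β * (1 / β) := mul_le_mul_right' hXle_β _
          _ ≤ 1 := FractionalIdeal.mul_one_div_le_one
      · exact FractionalIdeal.mul_one_div_le_one
    · have : X * (1 / α) * (1 / β) * β = (X * (1 / α)) * (β * (1 / β)) := by ring
      rw [this]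
      apply mul_le_one'
      · calc X * (1 / α) ≤ α * (1 / α) := mul_le_mul_right' hXle_α _
          _ ≤ 1 := FractionalIdeal.mul_one_div_le_one
      · exact FractionalIdeal.mul_one_div_le_one
  have hrep2 : W ≤ s.star (X * (1 / α) * (1 / β)) := by
    have h1 : W * (α * β) ≤ X := by
      apply le_inf
      · have heq : W * (α * β) = (W * β) * α := by ring
        rw [heq]
        have hb : W * β ≤ 1 := by rw [mul_comm]; exact hβW1
        calc (W * β) * α ≤ 1 * α := mul_le_mul_right' hb α
          _ = α := one_mul α
      · have heq : W * (α * β) = (W * α) * β := by ring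
        rw [heq]
        have hb : W * α ≤ 1 := by rw [mul_comm]; exact hαW1
        calc (W * α) * β ≤ 1 * β := mul_le_mul_right' hb β
          _ = β := one_mul β
    calc W ≤ s.star W := s.le_star W hW0
      _ = s.star (W * ((α * (1 / α)) * (β * (1 / β)))) :=
          (star_mul_one s hW0 hζαβ0 hζαβ).symm
      _ = s.star ((W * (α * β)) * ((1 / α) * (1 / β))) := by
          have : W * ((α * (1 / α)) * (β * (1 / β)))
              = (W * (α * β)) * ((1 / α) * (1 / β)) := by ring
          rw [this]
      _ ≤ s.star (X * ((1 / α) * (1 / β))) := by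
          apply s.star_mono _ _ _ _ (mul_le_mul_right' h1 _)
          · have : (W * (α * β)) * ((1 / α) * (1 / β))
                = W * ((α * (1 / α)) * (β * (1 / β))) := by ring
            rw [this]
            exact mul_ne_zero' hW0 hζαβ0
          · exact mul_ne_zero' hX0 (mul_ne_zero' hdα0 hdβ0)
      _ = s.star (X * (1 / α) * (1 / β)) := by rw [mul_assoc]
  -- W is star-invertible
  have hdW0 : (1 : FractionalIdeal D⁰ K) / W ≠ 0 := one_div_ne_zero' hW0
  have hWI : SInv s W := by
    have hN0 : (1 / X) * α * β ≠ 0 := mul_ne_zero' (mul_ne_zero' hdX0 hα0) hβ0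
    have hN'W : ((1 / X) * α * β) * W ≤ 1 := by
      calc ((1 / X) * α * β) * W ≤ ((1 / X) * α * β) * s.star (X * (1 / α) * (1 / β)) :=
          mul_le_mul_left' hrep2 _
        _ ≤ s.star (((1 / X) * α * β) * (X * (1 / α) * (1 / β))) := mul_star_le s hN0 hXab0
        _ = s.star ((X * (1 / X)) * ((α * (1 / α)) * (β * (1 / β)))) := by
            have : ((1 / X) * α * β) * (X * (1 / α) * (1 / β))
                = (X * (1 / X)) * ((α * (1 / α)) * (β * (1 / β))) := by ring
            rw [this]
        _ = 1 := hζ3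
    have hN'le : (1 / X) * α * β ≤ 1 / W := (FractionalIdeal.le_div_iff_mul_le hW0).mpr hN'W
    unfold SInv
    apply le_antisymm
    · exact star_le_one s (mul_ne_zero' hW0 hdW0) FractionalIdeal.mul_one_div_le_one
    · calc (1 : FractionalIdeal D⁰ K)
          = s.star ((X * (1 / X)) * ((α * (1 / α)) * (β * (1 / β)))) := hζ3.symm
        _ = s.star ((X * (1 / α) * (1 / β)) * ((1 / X) * α * β)) := by
            have : (X * (1 / X)) * ((α * (1 / α)) * (β * (1 / β)))
                = (X * (1 / α) * (1 / β)) * ((1 / X) * α * β) := by ring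
            rw [this]
        _ ≤ s.star (W * ((1 / X) * α * β)) := s.star_mono _ _
            (mul_ne_zero' hXab0 hN0) (mul_ne_zero' hW0 hN0) (mul_le_mul_right' hrep1 _)
        _ ≤ s.star (W * (1 / W)) := s.star_mono _ _ (mul_ne_zero' hW0 hN0)
            (mul_ne_zero' hW0 hdW0) (mul_le_mul_left' hN'le W)
  -- the pair p, q
  set p : FractionalIdeal D⁰ K := s.star (β * W) with hpdef
  set q : FractionalIdeal D⁰ K := s.star (α * W) with hqdef
  have hβW0 : β * W ≠ 0 := mul_ne_zero' hβ0 hW0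
  have hαW0 : α * W ≠ 0 := mul_ne_zero' hα0 hW0
  have hp0 : p ≠ 0 := star_ne_zero s hβW0
  have hq0 : q ≠ 0 := star_ne_zero s hαW0
  have hp1 : p ≤ 1 := star_le_one s hβW0 hβW1
  have hq1 : q ≤ 1 := star_le_one s hαW0 hαW1
  have hps : s.star p = p := s.star_star _ hβW0
  have hqs : s.star q = q := s.star_star _ hαW0
  have hpI : SInv s p := sInv_star s hβW0 (sInv_mul s hβ0 hW0 hβI hWI)
  have hqI : SInv s q := sInv_star s hαW0 (sInv_mul s hα0 hW0 hαI hWI)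
  have hWW0 : W * (1 / W) ≠ 0 := mul_ne_zero' hW0 hdW0
  -- coprimality
  have hco : Cop s p q := by
    intro Z hZ0 hZp hZq
    have hZβW : Z * (β * W) ≤ 1 :=
      le_trans (mul_le_mul_left' (s.le_star _ hβW0) Z) hZp
    have hZαW : Z * (α * W) ≤ 1 :=
      le_trans (mul_le_mul_left' (s.le_star _ hαW0) Z) hZq
    have hZUW : (Z * W) * U ≤ 1 := by
      have hsplit : Z * (U * W) = Z * (α * W) ⊔ Z * (β * W) := by
        rw [hUdef, sup_mul' α β W, mul_sup']
      calc (Z * W) * U = Z * (U * W) := by ring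
        _ = Z * (α * W) ⊔ Z * (β * W) := hsplit
        _ ≤ 1 := sup_le hZαW hZβW
    have hZW : Z * W ≤ W := by
      rw [hWdef]
      exact (FractionalIdeal.le_div_iff_mul_le hU0).mpr hZUW
    have hfin : Z * (W * (1 / W)) ≤ 1 := by
      calc Z * (W * (1 / W)) = (Z * W) * (1 / W) := by ring
        _ ≤ W * (1 / W) := mul_le_mul_right' hZW _
        _ ≤ 1 := FractionalIdeal.mul_one_div_le_one
    calc Z ≤ s.star Z := s.le_star Z hZ0
      _ = s.star (Z * (W * (1 / W))) := (star_mul_one s hZ0 hWW0 hWI).symm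
      _ ≤ s.star 1 := s.star_mono _ _ (mul_ne_zero' hZ0 hWW0) one_ne_zero hfin
      _ = 1 := s.star_one
  -- ===== the decisive sharp instance =====
  obtain ⟨Q0, hQ0⟩ := FractionalIdeal.le_one_iff_exists_coeIdeal.mp hq1
  obtain ⟨P0, hP0⟩ := FractionalIdeal.le_one_iff_exists_coeIdeal.mp hp1
  have hQ00 : Q0 ≠ 0 := by
    intro h
    apply hq0
    rw [← hQ0, h]
    exact FractionalIdeal.coeIdeal_bot
  have hP00 : P0 ≠ 0 := by
    intro h
    apply hp0
    rw [← hP0, h]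
    exact FractionalIdeal.coeIdeal_bot
  have hI₁0 : Q0 * Q0 ⊔ P0 ≠ 0 := by
    intro h
    apply hP00
    have hle : P0 ≤ Q0 * Q0 ⊔ P0 := le_sup_right
    rw [h] at hle
    exact le_bot_iff.mp hle
  obtain ⟨H, J, hH0, hJ0, hEq, hA, hB⟩ :=
    hsharp (Q0 * Q0 ⊔ P0) Q0 Q0 hI₁0 hQ00 hQ00 le_sup_left
  have hcoeI₁ : ((Q0 * Q0 ⊔ P0 : Ideal D) : FractionalIdeal D⁰ K) = q * q ⊔ p := by
    rw [FractionalIdeal.coeIdeal_sup, FractionalIdeal.coeIdeal_mul, hQ0, hP0, ← sup_eq_add]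
  rw [hcoeI₁] at hEq
  rw [hQ0] at hA hB
  have hHf0 : (H : FractionalIdeal D⁰ K) ≠ 0 := by
    intro h
    apply hH0
    rwa [← FractionalIdeal.coeIdeal_bot, FractionalIdeal.coeIdeal_inj,
      ← Ideal.zero_eq_bot] at h
  have hJf0 : (J : FractionalIdeal D⁰ K) ≠ 0 := by
    intro h
    apply hJ0
    rwa [← FractionalIdeal.coeIdeal_bot, FractionalIdeal.coeIdeal_inj,
      ← Ideal.zero_eq_bot] at h
  have hHf1 : (H : FractionalIdeal D⁰ K) ≤ 1 := FractionalIdeal.coeIdeal_le_one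
  have hJf1 : (J : FractionalIdeal D⁰ K) ≤ 1 := FractionalIdeal.coeIdeal_le_one
  have hqq0 : q * q ≠ 0 := mul_ne_zero' hq0 hq0
  have hHq : (H : FractionalIdeal D⁰ K) * q ≤ s.star (q * q ⊔ p) := by
    calc (H : FractionalIdeal D⁰ K) * q
        ≤ (H : FractionalIdeal D⁰ K) * s.star (J : FractionalIdeal D⁰ K) :=
          mul_le_mul_left' hB _
      _ ≤ s.star ((H : FractionalIdeal D⁰ K) * (J : FractionalIdeal D⁰ K)) :=
          mul_star_le s hHf0 hJf0
      _ = s.star (q * q ⊔ p) := hEq.symm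
  have hJq : (J : FractionalIdeal D⁰ K) * q ≤ s.star (q * q ⊔ p) := by
    calc (J : FractionalIdeal D⁰ K) * q
        ≤ (J : FractionalIdeal D⁰ K) * s.star (H : FractionalIdeal D⁰ K) :=
          mul_le_mul_left' hA _
      _ ≤ s.star ((J : FractionalIdeal D⁰ K) * (H : FractionalIdeal D⁰ K)) :=
          mul_star_le s hJf0 hHf0
      _ = s.star ((H : FractionalIdeal D⁰ K) * (J : FractionalIdeal D⁰ K)) := by
          rw [mul_comm]
      _ = s.star (q * q ⊔ p) := hEq.symm
  have hHC : (H : FractionalIdeal D⁰ K) ≤ s.star (p ⊔ q) :=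
    lemL1 s hst hp0 hq0 hp1 hq1 hqs hpI hqI hco hHf0 hHf1 hHq
  have hJC : (J : FractionalIdeal D⁰ K) ≤ s.star (p ⊔ q) :=
    lemL1 s hst hp0 hq0 hp1 hq1 hqs hpI hqI hco hJf0 hJf1 hJq
  -- p ≤ star ((p⊔q)*(p⊔q))
  have hpq0 : p ⊔ q ≠ 0 := sup_ne_zero_left hp0
  have hspq0 : s.star (p ⊔ q) ≠ 0 := star_ne_zero s hpq0
  have hple : p ≤ s.star ((p ⊔ q) * (p ⊔ q)) := by
    calc p ≤ q * q ⊔ p := le_sup_right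
      _ ≤ s.star (q * q ⊔ p) := s.le_star _ (sup_ne_zero_left hqq0)
      _ = s.star ((H : FractionalIdeal D⁰ K) * (J : FractionalIdeal D⁰ K)) := hEq
      _ ≤ s.star (s.star (p ⊔ q) * s.star (p ⊔ q)) := by
          apply s.star_mono _ _ (mul_ne_zero' hHf0 hJf0) (mul_ne_zero' hspq0 hspq0)
          calc (H : FractionalIdeal D⁰ K) * (J : FractionalIdeal D⁰ K)
              ≤ s.star (p ⊔ q) * (J : FractionalIdeal D⁰ K) := mul_le_mul_right' hHC _
            _ ≤ s.star (p ⊔ q) * s.star (p ⊔ q) := mul_le_mul_left' hJC _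
      _ = s.star ((p ⊔ q) * (p ⊔ q)) := star_star_mul_star s hpq0 hpq0
  -- the fractional ideal W₀
  have hdp0 : (1 : FractionalIdeal D⁰ K) / p ≠ 0 := one_div_ne_zero' hp0
  have hprod0 : (p ⊔ q) * (p ⊔ q) * (1 / p) ≠ 0 :=
    mul_ne_zero' (mul_ne_zero' hpq0 hpq0) hdp0
  have hW₀0 : ((p ⊔ q) * (p ⊔ q) * (1 / p)) ⊓ 1 ≠ 0 := inf_ne_zero' hprod0 one_ne_zero
  have h1leW₀ : (1 : FractionalIdeal D⁰ K) ≤ s.star (((p ⊔ q) * (p ⊔ q) * (1 / p)) ⊓ 1) := by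
    have h1le : (1 : FractionalIdeal D⁰ K) ≤ s.star ((p ⊔ q) * (p ⊔ q) * (1 / p)) := by
      calc (1 : FractionalIdeal D⁰ K) = s.star (p * (1 / p)) := hpI.symm
        _ ≤ s.star (s.star ((p ⊔ q) * (p ⊔ q)) * (1 / p)) := by
            apply s.star_mono _ _ (mul_ne_zero' hp0 hdp0)
              (mul_ne_zero' (star_ne_zero s (mul_ne_zero' hpq0 hpq0)) hdp0)
            exact mul_le_mul_right' hple _
        _ = s.star ((p ⊔ q) * (p ⊔ q) * (1 / p)) := by
            rw [mul_comm (s.star ((p ⊔ q) * (p ⊔ q))) (1 / p),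
              star_mul_star s hdp0 (mul_ne_zero' hpq0 hpq0),
              mul_comm (1 / p) ((p ⊔ q) * (p ⊔ q))]
    rw [hst _ _ hprod0 one_ne_zero, s.star_one]
    exact le_inf h1le le_rfl
  have hW₀1 : ((p ⊔ q) * (p ⊔ q) * (1 / p)) ⊓ 1 ≤ 1 := inf_le_right
  have hW₀p : (((p ⊔ q) * (p ⊔ q) * (1 / p)) ⊓ 1) * p ≤ s.star ((p ⊔ q) * (p ⊔ q)) := by
    calc (((p ⊔ q) * (p ⊔ q) * (1 / p)) ⊓ 1) * p ≤ ((p ⊔ q) * (p ⊔ q) * (1 / p)) * p :=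
        mul_le_mul_right' inf_le_left p
      _ = (p ⊔ q) * (p ⊔ q) * ((1 / p) * p) := by ring
      _ ≤ (p ⊔ q) * (p ⊔ q) * 1 := by
          apply mul_le_mul_left'
          rw [mul_comm]
          exact FractionalIdeal.mul_one_div_le_one
      _ = (p ⊔ q) * (p ⊔ q) := mul_one _
      _ ≤ s.star ((p ⊔ q) * (p ⊔ q)) := s.le_star _ (mul_ne_zero' hpq0 hpq0)
  have hW₀C : ((p ⊔ q) * (p ⊔ q) * (1 / p)) ⊓ 1 ≤ s.star (p ⊔ q) :=
    lemL2 s hst hp0 hq0 hp1 hq1 hps hpI hqI hco hW₀0 hW₀1 hW₀p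
  have hone : (1 : FractionalIdeal D⁰ K) ≤ s.star (p ⊔ q) := by
    calc (1 : FractionalIdeal D⁰ K) ≤ s.star (((p ⊔ q) * (p ⊔ q) * (1 / p)) ⊓ 1) := h1leW₀
      _ ≤ s.star (s.star (p ⊔ q)) := s.star_mono _ _ hW₀0 hspq0 hW₀C
      _ = s.star (p ⊔ q) := s.star_star _ hpq0
  -- identification and conclusion
  have hid : s.star (p ⊔ q) = s.star (U * W) := by
    rw [hpdef, hqdef, star_sup_star₂ s hβW0 hαW0]
    have hsum : β * W ⊔ α * W = U * W := by
      rw [← sup_mul' β α W, hUdef, sup_comm β α]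
    rw [hsum]
  apply le_antisymm (star_le_one s (mul_ne_zero' hU0 hW0) hUW1)
  rw [← hid]
  exact hone

end TwoGen


theorem star_mul_star' {M N : FractionalIdeal D⁰ K} (hM : M ≠ 0) (hN : N ≠ 0) :
    s.star (s.star M * N) = s.star (M * N) := by
  rw [mul_comm, star_mul_star s hN hM, mul_comm]

end SharpAux


open SharpAux in
theorem statement8_aux (D : Type*) [CommRing D] [IsDomain D]
    (K : Type*) [Field K] [Algebra D K] [IsFractionRing D K]
    (s : StarOperation D K) (hst : s.IsStable) (hsharp : s.IsSharp) :
    ∀ I : Ideal D, I ≠ 0 → I.FG →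
      s.star ((I : FractionalIdeal D⁰ K) * (I : FractionalIdeal D⁰ K)⁻¹) = 1 := by
  classical
  have hst' : Stab s := hst
  have hsharp' : IsSharpOp (D := D) (K := K) s.star := hsharp
  intro I₀ hI₀0 hFG
  obtain ⟨T₀, hT₀⟩ := hFG
  have key : ∀ (T : Finset D) (I : Ideal D), I ≠ 0 → Ideal.span (T : Set D) = I →
      s.star ((I : FractionalIdeal D⁰ K) * (I : FractionalIdeal D⁰ K)⁻¹) = 1 := by
    intro T
    induction T using Finset.induction_on with
    | empty =>
      intro I hI0 hT
      exfalso
      apply hI0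
      rw [← hT, Finset.coe_empty, Ideal.span_empty]
      rfl
    | @insert a T ha ih =>
      intro I hI0 hT
      have hsplit : I = Ideal.span {a} ⊔ Ideal.span (T : Set D) := by
        rw [← hT, Finset.coe_insert, Ideal.span_insert]
      by_cases hT'0 : Ideal.span (T : Set D) = 0
      · -- I is principal, generated by a
        have hIa : I = Ideal.span {a} := by
          rw [hsplit, hT'0]
          rw [Ideal.zero_eq_bot]
          exact sup_bot_eq _
        have ha0 : a ≠ 0 := by
          intro h
          apply hI0
          rw [hIa, h, Ideal.zero_eq_bot, Ideal.span_singleton_eq_bot]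
        have hx0 : algebraMap D K a ≠ 0 := by
          simpa using (map_ne_zero_iff _ (IsFractionRing.injective D K)).mpr ha0
        rw [hIa, FractionalIdeal.inv_eq, FractionalIdeal.coeIdeal_span_singleton,
          FractionalIdeal.one_div_spanSingleton,
          FractionalIdeal.spanSingleton_mul_spanSingleton, mul_inv_cancel₀ hx0,
          FractionalIdeal.spanSingleton_one, s.star_one]
      · by_cases ha0 : a = 0
        · -- a contributes nothing
          apply ih I hI0
          rw [hsplit, ha0]
          have : Ideal.span ({(0 : D)} : Set D) = ⊥ := Ideal.span_singleton_eq_bot.mpr rfl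
          rw [this, bot_sup_eq]
        · -- the interesting case
          have hx0 : algebraMap D K a ≠ 0 := by
            simpa using (map_ne_zero_iff _ (IsFractionRing.injective D K)).mpr ha0
          have hIH := ih (Ideal.span (T : Set D)) hT'0 rfl
          set Tc : FractionalIdeal D⁰ K := ((Ideal.span (T : Set D) : Ideal D) :
            FractionalIdeal D⁰ K) with hTcdef
          have hTc0 : Tc ≠ 0 := by
            intro h
            apply hT'0
            rwa [hTcdef, ← FractionalIdeal.coeIdeal_bot, FractionalIdeal.coeIdeal_inj,
              ← Ideal.zero_eq_bot] at h
          set x : K := algebraMap D K a with hxdef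
          set α : FractionalIdeal D⁰ K := FractionalIdeal.spanSingleton D⁰ x with hαdef
          set β : FractionalIdeal D⁰ K := s.star Tc with hβdef
          have hα0 : α ≠ 0 := FractionalIdeal.spanSingleton_ne_zero_iff.mpr hx0
          have hβ0 : β ≠ 0 := star_ne_zero s hTc0
          have hα1 : α ≤ 1 := FractionalIdeal.spanSingleton_le_iff_mem.mpr
            (FractionalIdeal.coe_mem_one _ _)
          have hβ1 : β ≤ 1 := star_le_one s hTc0 FractionalIdeal.coeIdeal_le_one
          have hαs : s.star α = α := star_spanSingleton s hx0
          have hβs : s.star β = β := s.star_star _ hTc0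
          have hαI : SInv s α := sInv_spanSingleton s hx0
          have hβI : SInv s β := by
            unfold SInv
            rw [hβdef, one_div_star s hTc0, star_mul_star' s hTc0 (one_div_ne_zero' hTc0)]
            rw [FractionalIdeal.inv_eq] at hIH
            exact hIH
          have h2g := two_gen s hst' hsharp' hα0 hβ0 hα1 hβ1 hαs hβs hαI hβI
          -- transfer to the goal
          have hcoeI : (I : FractionalIdeal D⁰ K) = α ⊔ Tc := by
            rw [hsplit, FractionalIdeal.coeIdeal_sup, FractionalIdeal.coeIdeal_span_singleton,
              ← FractionalIdeal.sup_eq_add, hTcdef, hαdef, hxdef]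
          rw [FractionalIdeal.inv_eq, hcoeI]
          have hsup0 : α ⊔ Tc ≠ 0 := sup_ne_zero_left hα0
          have hsupβ0 : α ⊔ β ≠ 0 := sup_ne_zero_left hα0
          have hdiv : 1 / (α ⊔ Tc) = 1 / (α ⊔ β) := by
            rw [hβdef]
            exact (one_div_sup_star s hα0 hTc0).symm
          have hstareq : s.star (α ⊔ β) = s.star (α ⊔ Tc) := by
            rw [hβdef]
            exact star_sup_star s hα0 hTc0
          rw [hdiv]
          calc s.star ((α ⊔ Tc) * (1 / (α ⊔ β)))
              = s.star (s.star (α ⊔ Tc) * (1 / (α ⊔ β))) :=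
                (star_mul_star' s hsup0 (one_div_ne_zero' hsupβ0)).symm
            _ = s.star (s.star (α ⊔ β) * (1 / (α ⊔ β))) := by rw [hstareq]
            _ = s.star ((α ⊔ β) * (1 / (α ⊔ β))) :=
                star_mul_star' s hsupβ0 (one_div_ne_zero' hsupβ0)
            _ = 1 := h2g
  exact key T₀ I₀ hI₀0 hT₀


/-- Let `*` be a stable star operation on `D` such that `D` is
`*`-sharp. Then every finitely generated nonzero ideal of `D` is `*`-invertible. -/
theorem statement8 (D : Type*) [CommRing D] [IsDomain D]
    (K : Type*) [Field K] [Algebra D K] [IsFractionRing D K]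
    (s : StarOperation D K) (hst : s.IsStable) (hsharp : s.IsSharp) :
    ∀ I : Ideal D, I ≠ 0 → I.FG →
      s.star ((I : FractionalIdeal D⁰ K) * (I : FractionalIdeal D⁰ K)⁻¹) = 1 :=
  statement8_aux D K s hst hsharp
end

section
/- Let D be an integral domain and * a star operation of finite character on D. Assume that (a) every nonzero x ∈ D is contained in only finitely many maximal *-ideals, and (b) for every maximal *-ideal M of D, the localization D_M is a valuation domain whose value group is order-isomorphic to a complete subgroup of the additive reals. Then D is ~*-sharp, and hence *-sharp. -/
open scoped nonZeroDivisors

/-- A subgroup `G` of `(ℝ, +)` is complete if every nonempty subset of `G` which is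
bounded above has a supremum in `G`. -/
def AddSubgroup.IsCompleteSubgroup (G : AddSubgroup ℝ) : Prop :=
  ∀ S : Set G, S.Nonempty → BddAbove S → ∃ g : G, IsLUB S g

/-- `R` is a valuation domain whose value group is order-isomorphic to a complete
subgroup of the additive reals. -/
def IsCompleteValuationDomain (R : Type*) [CommRing R] [IsDomain R] : Prop :=
  ∃ _ : ValuationRing R, ∃ G : AddSubgroup ℝ, G.IsCompleteSubgroup ∧
    Nonempty ((ValuationRing.ValueGroup R (FractionRing R))ˣ ≃*o Multiplicative G)

section StarSharpDefs

variable {D K : Type*} [CommRing D] [IsDomain D] [Field K] [Algebra D K] [IsFractionRing D K]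

/-- A star operation has finite character if `I*` is the union of `H*` over the
nonzero finitely generated subideals `H` of `I`. -/
def StarOperation.HasFiniteCharacter (s : StarOperation D K) : Prop :=
  ∀ I : FractionalIdeal D⁰ K, I ≠ 0 → ∀ x ∈ s.star I,
    ∃ H : FractionalIdeal D⁰ K, H ≠ 0 ∧ (H : Submodule D K).FG ∧ H ≤ I ∧ x ∈ s.star H

/-- `M` is a maximal `*`-ideal for the operation `star`: maximal among the proper
nonzero integral `*`-ideals of `D`. -/
def IsMaxStarIdealOp (star : FractionalIdeal D⁰ K → FractionalIdeal D⁰ K) (M : Ideal D) : Prop :=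
  M ≠ 0 ∧ M ≠ ⊤ ∧ star (M : FractionalIdeal D⁰ K) = (M : FractionalIdeal D⁰ K) ∧
    ∀ J : Ideal D, J ≠ ⊤ → star (J : FractionalIdeal D⁰ K) = (J : FractionalIdeal D⁰ K) →
      M ≤ J → J = M

end StarSharpDefs

lemma csInf_mem_of_complete (G : AddSubgroup ℝ) (hG : G.IsCompleteSubgroup)
    (S : Set ℝ) (hne : S.Nonempty) (hbdd : BddBelow S) (hsub : ∀ s ∈ S, s ∈ G) :
    sInf S ∈ G := by
  by_cases hmem : sInf S ∈ S
  · exact hsub _ hmem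
  set r := sInf S with hr
  have hlow : ∀ s ∈ S, r ≤ s := fun s hs => csInf_le hbdd hs
  have happrox : ∀ ε : ℝ, 0 < ε → ∃ s ∈ S, s < r + ε := by
    intro ε hε
    exact exists_lt_of_csInf_lt hne (by linarith)
  have hsmall : ∀ ε : ℝ, 0 < ε → ∃ g : ℝ, g ∈ G ∧ 0 < g ∧ g < ε := by
    intro ε hε
    obtain ⟨s₁, hs₁S, hs₁⟩ := happrox (ε/2) (by linarith)
    have hrs₁ : r < s₁ := lt_of_le_of_ne (hlow _ hs₁S) (by rintro rfl; exact hmem hs₁S)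
    obtain ⟨s₂, hs₂S, hs₂⟩ := happrox (s₁ - r) (by linarith)
    refine ⟨s₁ - s₂, sub_mem (hsub _ hs₁S) (hsub _ hs₂S), by linarith, by
      have := hlow _ hs₂S; linarith⟩
  obtain ⟨s₀, hs₀⟩ := hne
  set T : Set G := {g : G | -(g : ℝ) ∈ S} with hT
  have hTne : T.Nonempty := ⟨⟨-s₀, neg_mem (hsub _ hs₀)⟩, by
    show -(-s₀ : ℝ) ∈ S
    rw [neg_neg]; exact hs₀⟩
  have hTbdd : BddAbove T := by
    obtain ⟨d, hdG, hd0, _⟩ := hsmall 1 one_pos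
    obtain ⟨n, hn⟩ := Archimedean.arch ((-r) - (-s₀)) hd0
    refine ⟨⟨-s₀ + n • d, add_mem (neg_mem (hsub _ hs₀)) (nsmul_mem hdG n)⟩, ?_⟩
    rintro ⟨t, htG⟩ ht
    have h1 : -t ∈ S := ht
    have h2 : r ≤ -t := hlow _ h1
    have : (t : ℝ) ≤ -s₀ + n • d := by
      have : ((-r) - (-s₀)) ≤ n • d := hn
      push_cast at this ⊢
      linarith
    exact this
  obtain ⟨g₀, hg₀⟩ := hG T hTne hTbdd
  have hub : ∀ s ∈ S, -(g₀ : ℝ) ≤ s := by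
    intro s hs
    have : (⟨-s, neg_mem (hsub _ hs)⟩ : G) ∈ T := by
      show -(-s : ℝ) ∈ S
      rw [neg_neg]; exact hs
    have := hg₀.1 this
    have : (-s : ℝ) ≤ g₀ := this
    linarith
  have hle : -(g₀ : ℝ) ≤ r := le_csInf ⟨s₀, hs₀⟩ hub
  have hge : r ≤ -(g₀ : ℝ) := by
    by_contra hc
    push_neg at hc
    obtain ⟨d, hdG, hd0, hdη⟩ := hsmall ((g₀ : ℝ) + r) (by linarith)
    have : g₀ ≤ g₀ - ⟨d, hdG⟩ := by
      refine hg₀.2 ?_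
      rintro ⟨t, htG⟩ ht
      have h2 : r ≤ -t := hlow _ ht
      have : (t : ℝ) ≤ (g₀ : ℝ) - d := by linarith
      exact this
    have : (g₀ : ℝ) ≤ (g₀ : ℝ) - d := this
    linarith
  have : r = -(g₀ : ℝ) := le_antisymm hge hle
  rw [this]
  exact neg_mem g₀.2

/-- Abstract "real-valued valuation" data on a domain `R`. -/
structure RealVal (R : Type*) [CommRing R] [IsDomain R] where
  G : AddSubgroup ℝ
  hG : G.IsCompleteSubgroup
  e : R → ℝ
  hmul : ∀ x y : R, x ≠ 0 → y ≠ 0 → e (x * y) = e x + e y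
  hdvd : ∀ x y : R, x ≠ 0 → y ≠ 0 → (e x ≤ e y ↔ x ∣ y)
  hrange : ∀ x : R, x ≠ 0 → e x ∈ G
  hsurj : ∀ g : ℝ, g ∈ G → 0 ≤ g → ∃ x : R, x ≠ 0 ∧ e x = g


namespace RealVal

variable {R : Type*} [CommRing R] [IsDomain R] (V : RealVal R)

lemma e_one : V.e 1 = 0 := by
  have := V.hmul 1 1 one_ne_zero one_ne_zero
  simp only [mul_one] at this; linarith

lemma e_nonneg (x : R) (hx : x ≠ 0) : 0 ≤ V.e x := by
  have := (V.hdvd 1 x one_ne_zero hx).mpr ⟨x, (one_mul x).symm⟩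
  rwa [V.e_one] at this

/-- The closed "cut" ideal `{x | e x ≥ c}`. -/
def Cl (c : ℝ) : Ideal R where
  carrier := {x | x = 0 ∨ c ≤ V.e x}
  zero_mem' := Or.inl rfl
  add_mem' := by
    rintro x y (rfl | hx) (rfl | hy)
    · simp
    · simpa using Or.inr hy
    · simpa using Or.inr hx
    · by_cases hx0 : x = 0
      · subst hx0; simpa using Or.inr hy
      by_cases hy0 : y = 0
      · subst hy0; simpa using Or.inr hx
      by_cases hxy : x + y = 0
      · exact Or.inl hxy
      right
      rcases le_total (V.e x) (V.e y) with h | h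
      · obtain ⟨z, rfl⟩ := (V.hdvd x y hx0 hy0).mp h
        have : x ∣ x + x * z := ⟨1 + z, by ring⟩
        exact le_trans hx ((V.hdvd x _ hx0 hxy).mpr this)
      · obtain ⟨z, rfl⟩ := (V.hdvd y x hy0 hx0).mp h
        have : y ∣ y * z + y := ⟨z + 1, by ring⟩
        exact le_trans hy ((V.hdvd y _ hy0 hxy).mpr this)
  smul_mem' := by
    intro r x hx
    rcases hx with rfl | hx
    · simp
    by_cases hx0 : x = 0
    · subst hx0; simp
    by_cases hr0 : r = 0
    · subst hr0; simp
    right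
    rw [smul_eq_mul, V.hmul r x hr0 hx0]
    have := V.e_nonneg r hr0
    linarith

/-- The open "cut" ideal `{x | e x > c}`. -/
def Op (c : ℝ) : Ideal R where
  carrier := {x | x = 0 ∨ c < V.e x}
  zero_mem' := Or.inl rfl
  add_mem' := by
    rintro x y (rfl | hx) (rfl | hy)
    · simp
    · simpa using Or.inr hy
    · simpa using Or.inr hx
    · by_cases hx0 : x = 0
      · subst hx0; simpa using Or.inr hy
      by_cases hy0 : y = 0
      · subst hy0; simpa using Or.inr hx
      by_cases hxy : x + y = 0
      · exact Or.inl hxy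
      right
      rcases le_total (V.e x) (V.e y) with h | h
      · obtain ⟨z, rfl⟩ := (V.hdvd x y hx0 hy0).mp h
        have : x ∣ x + x * z := ⟨1 + z, by ring⟩
        exact lt_of_lt_of_le hx ((V.hdvd x _ hx0 hxy).mpr this)
      · obtain ⟨z, rfl⟩ := (V.hdvd y x hy0 hx0).mp h
        have : y ∣ y * z + y := ⟨z + 1, by ring⟩
        exact lt_of_lt_of_le hy ((V.hdvd y _ hy0 hxy).mpr this)
  smul_mem' := by
    intro r x hx
    rcases hx with rfl | hx
    · simp
    by_cases hx0 : x = 0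
    · subst hx0; simp
    by_cases hr0 : r = 0
    · subst hr0; simp
    right
    rw [smul_eq_mul, V.hmul r x hr0 hx0]
    have := V.e_nonneg r hr0
    linarith

lemma mem_Cl_iff {c : ℝ} {x : R} : x ∈ V.Cl c ↔ x = 0 ∨ c ≤ V.e x := Iff.rfl
lemma mem_Op_iff {c : ℝ} {x : R} : x ∈ V.Op c ↔ x = 0 ∨ c < V.e x := Iff.rfl

lemma Cl_mul_Cl {c d : ℝ} (hc : c ∈ V.G) (hc0 : 0 ≤ c) (hd0 : 0 ≤ d) :
    V.Cl c * V.Cl d = V.Cl (c + d) := by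
  apply le_antisymm
  · rw [Ideal.mul_le]
    intro x hx y hy
    by_cases hx0 : x = 0
    · subst hx0; simp
    by_cases hy0 : y = 0
    · subst hy0; simp
    right
    rcases hx with rfl | hx; · exact absurd rfl hx0
    rcases hy with rfl | hy; · exact absurd rfl hy0
    rw [V.hmul x y hx0 hy0]; linarith
  · intro x hx
    rcases hx with rfl | hx
    · exact zero_mem _
    by_cases hx0 : x = 0
    · subst hx0; exact zero_mem _
    obtain ⟨y, hy0, hye⟩ := V.hsurj c hc hc0
    obtain ⟨z, rfl⟩ := (V.hdvd y x hy0 hx0).mp (by rw [hye]; linarith)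
    have hz0 : z ≠ 0 := by rintro rfl; rw [mul_zero] at hx0; exact hx0 rfl
    have hez : d ≤ V.e z := by
      have := V.hmul y z hy0 hz0; rw [hye] at this; rw [this] at hx; linarith
    exact Ideal.mul_mem_mul (Or.inr (le_of_eq hye.symm)) (Or.inr hez)

lemma Cl_mul_Op {c d : ℝ} (hc : c ∈ V.G) (hc0 : 0 ≤ c) (hd0 : 0 ≤ d) :
    V.Cl c * V.Op d = V.Op (c + d) := by
  apply le_antisymm
  · rw [Ideal.mul_le]
    intro x hx y hy
    by_cases hx0 : x = 0
    · subst hx0; simp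
    by_cases hy0 : y = 0
    · subst hy0; simp
    right
    rcases hx with rfl | hx; · exact absurd rfl hx0
    rcases hy with rfl | hy; · exact absurd rfl hy0
    rw [V.hmul x y hx0 hy0]; linarith
  · intro x hx
    rcases hx with rfl | hx
    · exact zero_mem _
    by_cases hx0 : x = 0
    · subst hx0; exact zero_mem _
    obtain ⟨y, hy0, hye⟩ := V.hsurj c hc hc0
    obtain ⟨z, rfl⟩ := (V.hdvd y x hy0 hx0).mp (by rw [hye]; linarith)
    have hz0 : z ≠ 0 := by rintro rfl; rw [mul_zero] at hx0; exact hx0 rfl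
    have hez : d < V.e z := by
      have := V.hmul y z hy0 hz0; rw [hye] at this; rw [this] at hx; linarith
    exact Ideal.mul_mem_mul (Or.inr (le_of_eq hye.symm)) (Or.inr hez)

lemma Op_mul_Cl {c d : ℝ} (hc : c ∈ V.G) (hc0 : 0 ≤ c) (hd0 : 0 ≤ d) :
    V.Op d * V.Cl c = V.Op (d + c) := by
  rw [mul_comm, V.Cl_mul_Op hc hc0 hd0, add_comm]

lemma Cl_mono {c d : ℝ} (h : c ≤ d) : V.Cl d ≤ V.Cl c := by
  rintro x (rfl | hx)
  · exact zero_mem _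
  · exact Or.inr (le_trans h hx)

lemma Op_le_Cl {c d : ℝ} (h : c ≤ d) : V.Op d ≤ V.Cl c := by
  rintro x (rfl | hx)
  · exact zero_mem _
  · exact Or.inr (le_trans h (le_of_lt hx))

lemma Op_mono {c d : ℝ} (h : c ≤ d) : V.Op d ≤ V.Op c := by
  rintro x (rfl | hx)
  · exact zero_mem _
  · exact Or.inr (lt_of_le_of_lt h hx)

/-- The set of values of a nonzero ideal. -/
def vset (C : Ideal R) : Set ℝ := {t | ∃ x ∈ C, x ≠ 0 ∧ V.e x = t}

/-- The infimum of values of an ideal. -/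
noncomputable def inf (C : Ideal R) : ℝ := sInf (V.vset C)

lemma vset_nonempty {C : Ideal R} (hC : C ≠ ⊥) : (V.vset C).Nonempty := by
  obtain ⟨x, hxC, hx0⟩ := Submodule.exists_mem_ne_zero_of_ne_bot hC
  exact ⟨V.e x, x, hxC, hx0, rfl⟩

lemma vset_bddBelow (C : Ideal R) : BddBelow (V.vset C) := by
  refine ⟨0, ?_⟩
  rintro t ⟨x, hxC, hx0, rfl⟩
  exact V.e_nonneg x hx0

lemma inf_le_e {C : Ideal R} {x : R} (hxC : x ∈ C) (hx0 : x ≠ 0) : V.inf C ≤ V.e x :=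
  csInf_le (V.vset_bddBelow C) ⟨x, hxC, hx0, rfl⟩

lemma inf_nonneg {C : Ideal R} (hC : C ≠ ⊥) : 0 ≤ V.inf C := by
  refine le_csInf (V.vset_nonempty hC) ?_
  rintro t ⟨x, hxC, hx0, rfl⟩
  exact V.e_nonneg x hx0

lemma inf_mem_G {C : Ideal R} (hC : C ≠ ⊥) : V.inf C ∈ V.G := by
  refine csInf_mem_of_complete V.G V.hG _ (V.vset_nonempty hC) (V.vset_bddBelow C) ?_
  rintro t ⟨x, hxC, hx0, rfl⟩
  exact V.hrange x hx0

lemma mem_of_le_e {C : Ideal R} {x y : R} (hxC : x ∈ C) (hx0 : x ≠ 0) (hy0 : y ≠ 0)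
    (h : V.e x ≤ V.e y) : y ∈ C := by
  obtain ⟨z, rfl⟩ := (V.hdvd x y hx0 hy0).mp h
  exact Ideal.mul_mem_right z C hxC

lemma classify {C : Ideal R} (hC : C ≠ ⊥) : C = V.Cl (V.inf C) ∨ C = V.Op (V.inf C) := by
  by_cases hatt : ∃ x ∈ C, x ≠ 0 ∧ V.e x = V.inf C
  · left
    obtain ⟨x₀, hx₀C, hx₀0, hx₀e⟩ := hatt
    ext z
    constructor
    · intro hz
      by_cases hz0 : z = 0
      · exact Or.inl hz0
      · exact Or.inr (V.inf_le_e hz hz0)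
    · rintro (rfl | hz)
      · exact zero_mem _
      by_cases hz0 : z = 0
      · subst hz0; exact zero_mem _
      exact V.mem_of_le_e hx₀C hx₀0 hz0 (by rw [hx₀e]; exact hz)
  · right
    push_neg at hatt
    ext z
    constructor
    · intro hz
      by_cases hz0 : z = 0
      · exact Or.inl hz0
      exact Or.inr (lt_of_le_of_ne (V.inf_le_e hz hz0) (fun h => hatt z hz hz0 h.symm))
    · rintro (rfl | hz)
      · exact zero_mem _
      by_cases hz0 : z = 0
      · subst hz0; exact zero_mem _
      obtain ⟨t, ⟨x, hxC, hx0, rfl⟩, hlt⟩ := exists_lt_of_csInf_lt (V.vset_nonempty hC) hz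
      exact V.mem_of_le_e hxC hx0 hz0 (le_of_lt hlt)

lemma le_Cl_inf {C : Ideal R} : C ≤ V.Cl (V.inf C) := by
  intro z hz
  by_cases hz0 : z = 0
  · exact Or.inl hz0
  · exact Or.inr (V.inf_le_e hz hz0)

/-- The local factorization lemma: in a valuation domain with value group a
complete subgroup of `ℝ`, if `a * b ≤ i` then `i` factors as `h * j` with
`a ≤ h`, `b ≤ j`; moreover `h, j ⊇ i`. -/
lemma factor (V : RealVal R) (a b i : Ideal R) (ha : a ≠ ⊥) (hb : b ≠ ⊥) (hi : i ≠ ⊥)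
    (hab : a * b ≤ i) :
    ∃ h j : Ideal R, h * j = i ∧ a ≤ h ∧ b ≤ j ∧ i ≤ h ∧ i ≤ j := by
  set rI := V.inf i with hrI
  set rA := V.inf a with hrA
  set rB := V.inf b with hrB
  have hrI0 : 0 ≤ rI := V.inf_nonneg hi
  have hrA0 : 0 ≤ rA := V.inf_nonneg ha
  have hrB0 : 0 ≤ rB := V.inf_nonneg hb
  have hrIG : rI ∈ V.G := V.inf_mem_G hi
  have hrAG : rA ∈ V.G := V.inf_mem_G ha
  have hrBG : rB ∈ V.G := V.inf_mem_G hb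
  have hImem : ∀ x ∈ a, ∀ y ∈ b, x ≠ 0 → y ≠ 0 → rI ≤ V.e x + V.e y := by
    intro x hx y hy hx0 hy0
    have hxy : x * y ∈ i := hab (Ideal.mul_mem_mul hx hy)
    have := V.inf_le_e hxy (mul_ne_zero hx0 hy0)
    rwa [V.hmul x y hx0 hy0] at this
  have key : rI ≤ rA + rB := by
    by_contra hk
    push_neg at hk
    set ε := (rI - rA - rB) / 2 with hε
    have hε0 : 0 < ε := by simp only [hε]; linarith
    obtain ⟨t₁, ⟨x, hxa, hx0, rfl⟩, hx⟩ :=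
      exists_lt_of_csInf_lt (V.vset_nonempty ha) (show rA < rA + ε by linarith)
    obtain ⟨t₂, ⟨y, hyb, hy0, rfl⟩, hy⟩ :=
      exists_lt_of_csInf_lt (V.vset_nonempty hb) (show rB < rB + ε by linarith)
    have := hImem x hxa y hyb hx0 hy0
    simp only [hε] at hx hy
    linarith
  have haCl : a ≤ V.Cl rA := V.le_Cl_inf
  have hbCl : b ≤ V.Cl rB := V.le_Cl_inf
  rcases V.classify hi with hIcl | hIop
  · -- i closed
    set m := min rA rI with hm
    have hmG : m ∈ V.G := by
      rcases min_cases rA rI with ⟨h1, _⟩ | ⟨h1, _⟩ <;> rw [hm, h1] <;> assumption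
    have hm0 : 0 ≤ m := le_min hrA0 hrI0
    have hmI : m ≤ rI := min_le_right _ _
    refine ⟨V.Cl m, V.Cl (rI - m), ?_, ?_, ?_, ?_, ?_⟩
    · rw [V.Cl_mul_Cl hmG hm0 (by linarith)]
      rw [hIcl]; congr 1; ring
    · exact le_trans haCl (V.Cl_mono (min_le_left _ _))
    · refine le_trans hbCl (V.Cl_mono ?_)
      rcases le_total rA rI with h | h
      · rw [hm, min_eq_left h]; linarith
      · rw [hm, min_eq_right h]; linarith
    · rw [hIcl]; exact V.Cl_mono hmI
    · rw [hIcl]; exact V.Cl_mono (by linarith)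
  · -- i open
    rcases lt_or_ge rI rA with hcase | hcase
    · refine ⟨i, ⊤, Ideal.mul_top i, ?_, le_top, le_refl i, le_top⟩
      rw [hIop]
      intro x hx
      by_cases hx0 : x = 0
      · exact Or.inl hx0
      · exact Or.inr (lt_of_lt_of_le hcase (V.inf_le_e hx hx0))
    · -- rA ≤ rI
      have hd0 : 0 ≤ rI - rA := by linarith
      have hdB : rI - rA ≤ rB := by linarith
      rcases lt_or_ge (rI - rA) rB with hsub | hsub
      · -- rB > rI - rA
        refine ⟨V.Cl rA, V.Op (rI - rA), ?_, haCl, ?_, ?_, ?_⟩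
        · rw [V.Cl_mul_Op hrAG hrA0 hd0, hIop]; congr 1; ring
        · intro y hy
          by_cases hy0 : y = 0
          · exact Or.inl hy0
          · exact Or.inr (lt_of_lt_of_le hsub (V.inf_le_e hy hy0))
        · rw [hIop]; exact V.Op_le_Cl hcase
        · rw [hIop]; exact V.Op_mono (by linarith)
      · -- rB = rI - rA
        have hBeq : rB = rI - rA := le_antisymm hsub hdB
        by_cases hattA : ∃ x ∈ a, x ≠ 0 ∧ V.e x = rA
        · -- a attains, so b cannot attain rB
          have hBstrict : ∀ y ∈ b, y ≠ 0 → rB < V.e y := by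
            intro y hy hy0
            refine lt_of_le_of_ne (V.inf_le_e hy hy0) ?_
            intro heq
            obtain ⟨x₀, hx₀a, hx₀0, hx₀e⟩ := hattA
            have hxy : x₀ * y ∈ i := hab (Ideal.mul_mem_mul hx₀a hy)
            rw [hIop] at hxy
            rcases hxy with h0 | hgt
            · exact (mul_ne_zero hx₀0 hy0) h0
            · rw [V.hmul x₀ y hx₀0 hy0, hx₀e, ← heq] at hgt
              rw [hBeq] at hgt; linarith
          refine ⟨V.Cl rA, V.Op (rI - rA), ?_, haCl, ?_, ?_, ?_⟩
          · rw [V.Cl_mul_Op hrAG hrA0 hd0, hIop]; congr 1; ring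
          · intro y hy
            by_cases hy0 : y = 0
            · exact Or.inl hy0
            · exact Or.inr (by rw [← hBeq]; exact hBstrict y hy hy0)
          · rw [hIop]; exact V.Op_le_Cl hcase
          · rw [hIop]; exact V.Op_mono (by linarith)
        · -- a does not attain rA
          push_neg at hattA
          have hAstrict : ∀ x ∈ a, x ≠ 0 → rA < V.e x := by
            intro x hx hx0
            exact lt_of_le_of_ne (V.inf_le_e hx hx0) (fun h => hattA x hx hx0 h.symm)
          have hdG : rI - rA ∈ V.G := sub_mem hrIG hrAG
          refine ⟨V.Op rA, V.Cl (rI - rA), ?_, ?_, ?_, ?_, ?_⟩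
          · rw [V.Op_mul_Cl hdG hd0 hrA0, hIop]; congr 1; ring
          · intro x hx
            by_cases hx0 : x = 0
            · exact Or.inl hx0
            · exact Or.inr (hAstrict x hx hx0)
          · exact le_trans hbCl (V.Cl_mono (by linarith))
          · rw [hIop]; exact V.Op_mono hcase
          · rw [hIop]; exact V.Op_le_Cl (by linarith)
  
end RealVal

lemma exists_realVal (R : Type*) [CommRing R] [IsDomain R]
    (h : IsCompleteValuationDomain R) : Nonempty (RealVal R) := by
  classical
  obtain ⟨vr, G, hG, ⟨iso⟩⟩ := h
  set K' := FractionRing R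
  set v := ValuationRing.valuation R K' with hv
  set φ := algebraMap R K' with hφ
  have hinj : Function.Injective φ := IsFractionRing.injective R K'
  have hφne : ∀ x : R, x ≠ 0 → φ x ≠ 0 := fun x hx h0 => hx (hinj (by rw [h0, map_zero]))
  have hvne : ∀ x : R, x ≠ 0 → v (φ x) ≠ 0 := fun x hx => (Valuation.ne_zero_iff v).mpr (hφne x hx)
  have hint : ∀ x : R, v (φ x) ≤ 1 := fun x =>
    (Valuation.mem_integer_iff v (φ x)).mp
      (by rw [ValuationRing.mem_integer_iff]; exact ⟨x, rfl⟩)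
  have hdvd0 : ∀ x y : R, x ≠ 0 → y ≠ 0 → (v (φ y) ≤ v (φ x) ↔ x ∣ y) := by
    intro x y hx hy
    constructor
    · intro hle
      rcases ValuationRing.cond x y with ⟨c, hc | hc⟩
      · exact ⟨c, hc.symm⟩
      · -- y * c = x
        have hc0 : c ≠ 0 := by rintro rfl; rw [mul_zero] at hc; exact hx hc.symm
        have h1 : v (φ x) = v (φ y) * v (φ c) := by rw [← hc, map_mul, map_mul]
        have h2 : v (φ x) ≤ v (φ y) := by
          rw [h1]; exact mul_le_of_le_one_right' (hint c)
        have heq : v (φ y) * v (φ c) = v (φ y) * 1 := by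
          rw [mul_one, ← h1]; exact le_antisymm h2 hle
        have hc1 : v (φ c) = 1 := mul_left_cancel₀ (hvne y hy) heq
        -- c is a unit
        have : v ((φ c)⁻¹) ≤ 1 := by rw [map_inv₀, hc1, inv_one]
        obtain ⟨d, hd⟩ := (ValuationRing.mem_integer_iff R K' _).mp
          ((Valuation.mem_integer_iff v _).mpr this)
        have hcd : c * d = 1 := by
          apply hinj
          rw [map_mul, map_one]
          rw [show φ d = (φ c)⁻¹ from hd]
          exact mul_inv_cancel₀ (hφne c hc0)
        refine ⟨d, ?_⟩
        calc y = y * (c * d) := by rw [hcd, mul_one]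
        _ = (y * c) * d := by ring
        _ = x * d := by rw [hc]
    · rintro ⟨z, rfl⟩
      by_cases hz : z = 0
      · exact absurd (by rw [hz, mul_zero]) hy
      rw [map_mul, map_mul]
      exact mul_le_of_le_one_right' (hint z)
  refine ⟨⟨G, hG,
    fun x => if hx : x = 0 then 0
      else -((Multiplicative.toAdd (iso (Units.mk0 (v (φ x)) (hvne x hx))) : G) : ℝ),
    ?_, ?_, ?_, ?_⟩⟩
  · -- hmul
    intro x y hx hy
    rw [dif_neg (mul_ne_zero hx hy), dif_neg hx, dif_neg hy]
    have hA : Units.mk0 (v (φ (x*y))) (hvne _ (mul_ne_zero hx hy))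
        = Units.mk0 (v (φ x)) (hvne x hx) * Units.mk0 (v (φ y)) (hvne y hy) := by
      ext; rw [Units.val_mul, Units.val_mk0, Units.val_mk0, Units.val_mk0, map_mul, map_mul]
    rw [hA, map_mul, toAdd_mul]
    push_cast
    ring
  · -- hdvd
    intro x y hx hy
    rw [dif_neg hx, dif_neg hy, neg_le_neg_iff]
    rw [show (((Multiplicative.toAdd (iso (Units.mk0 (v (φ y)) (hvne y hy))) : G) : ℝ) ≤
        ((Multiplicative.toAdd (iso (Units.mk0 (v (φ x)) (hvne x hx))) : G) : ℝ)) ↔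
        (Multiplicative.toAdd (iso (Units.mk0 (v (φ y)) (hvne y hy))) ≤
         Multiplicative.toAdd (iso (Units.mk0 (v (φ x)) (hvne x hx)))) from Subtype.coe_le_coe]
    rw [Multiplicative.toAdd_le, map_le_map_iff, ← Units.val_le_val, Units.val_mk0, Units.val_mk0]
    exact hdvd0 x y hx hy
  · -- hrange
    intro x hx
    rw [dif_neg hx]
    exact neg_mem (Multiplicative.toAdd (iso (Units.mk0 (v (φ x)) (hvne x hx)))).2
  · -- hsurj
    intro g hg hg0
    set gG : G := ⟨g, hg⟩ with hgG
    obtain ⟨δ, hδ⟩ := EquivLike.surjective iso (Multiplicative.ofAdd (-gG))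
    obtain ⟨xk, hxk⟩ := Quotient.exists_rep (δ : ValuationRing.ValueGroup R K')
    have hvxk : v xk = (δ : ValuationRing.ValueGroup R K') := hxk
    have hδle : (δ : ValuationRing.ValueGroup R K') ≤ 1 := by
      rw [show (1 : ValuationRing.ValueGroup R K') = ((1 : (ValuationRing.ValueGroup R K')ˣ) : ValuationRing.ValueGroup R K') from rfl]
      rw [Units.val_le_val]
      rw [← map_le_map_iff iso, hδ, map_one]
      rw [show (1 : Multiplicative G) = Multiplicative.ofAdd (0 : G) from rfl]
      rw [Multiplicative.ofAdd_le]
      exact neg_nonpos.mpr (show (0 : G) ≤ gG from hg0)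
    obtain ⟨a, ha⟩ := (ValuationRing.mem_integer_iff R K' xk).mp
      ((Valuation.mem_integer_iff v xk).mpr (by rw [hvxk]; exact hδle))
    have ha0 : a ≠ 0 := by
      rintro rfl
      rw [map_zero] at ha
      have := hvxk
      rw [← ha, map_zero] at this
      exact (Units.ne_zero δ) this.symm
    refine ⟨a, ha0, ?_⟩
    rw [dif_neg ha0]
    have hmk : Units.mk0 (v (φ a)) (hvne a ha0) = δ := by
      ext; rw [Units.val_mk0, hφ, ha, hvxk]
    rw [hmk, hδ]
    simp [hgG]

section StarLemmas

variable {D K : Type*} [CommRing D] [IsDomain D] [Field K] [Algebra D K] [IsFractionRing D K]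

lemma finset_subset_chain_member {ch : Set (Ideal D)} (hch : IsChain (· ≤ ·) ch)
    {y : Ideal D} (hy : y ∈ ch) (F : Finset D) (hF : ∀ t ∈ F, ∃ J ∈ ch, t ∈ J) :
    ∃ J ∈ ch, ∀ t ∈ F, t ∈ J := by
  classical
  induction F using Finset.induction_on with
  | empty => exact ⟨y, hy, by simp⟩
  | insert _ _ hnotmem ih =>
    rename_i a F'
    obtain ⟨J₁, hJ₁, hJ₁F⟩ := ih (fun t ht => hF t (Finset.mem_insert_of_mem ht))
    obtain ⟨J₂, hJ₂, hJ₂a⟩ := hF a (Finset.mem_insert_self a F')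
    rcases hch.total hJ₁ hJ₂ with h | h
    · exact ⟨J₂, hJ₂, fun t ht => by
        rcases Finset.mem_insert.mp ht with rfl | ht
        · exact hJ₂a
        · exact h (hJ₁F t ht)⟩
    · exact ⟨J₁, hJ₁, fun t ht => by
        rcases Finset.mem_insert.mp ht with rfl | ht
        · exact h hJ₂a
        · exact hJ₁F t ht⟩

lemma exists_max_star (s : StarOperation D K) (hfc : s.HasFiniteCharacter)
    (c : Ideal D) (hc0 : c ≠ ⊥) (hcp : s.star (c : FractionalIdeal D⁰ K) ≠ 1) :
    ∃ M : Ideal D, IsMaxStarIdealOp s.star M ∧ c ≤ M := by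
  have hcne : (c : FractionalIdeal D⁰ K) ≠ 0 := by
    rw [Ne, FractionalIdeal.coeIdeal_eq_zero]; exact hc0
  have hstarle : s.star (c : FractionalIdeal D⁰ K) ≤ 1 := by
    have := s.star_mono _ 1 hcne one_ne_zero FractionalIdeal.coeIdeal_le_one
    rwa [s.star_one] at this
  obtain ⟨c₀, hc₀⟩ := FractionalIdeal.le_one_iff_exists_coeIdeal.mp hstarle
  have hcc₀ : (c : FractionalIdeal D⁰ K) ≤ (c₀ : FractionalIdeal D⁰ K) := by
    rw [hc₀]; exact s.le_star _ hcne
  have hc₀c : c ≤ c₀ := (FractionalIdeal.coeIdeal_le_coeIdeal K).mp hcc₀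
  have hc₀0 : c₀ ≠ ⊥ := fun h => hc0 (le_bot_iff.mp (h ▸ hc₀c))
  have hc₀star : s.star (c₀ : FractionalIdeal D⁰ K) = (c₀ : FractionalIdeal D⁰ K) := by
    rw [hc₀]; exact s.star_star _ hcne
  have hc₀top : c₀ ≠ ⊤ := by
    rintro rfl
    rw [FractionalIdeal.coeIdeal_top] at hc₀
    exact hcp hc₀.symm
  set S : Set (Ideal D) :=
    {J | J ≠ ⊥ ∧ J ≠ ⊤ ∧ s.star (J : FractionalIdeal D⁰ K) = (J : FractionalIdeal D⁰ K)} with hS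
  have hchain : ∀ ch ⊆ S, IsChain (· ≤ ·) ch → ∀ y ∈ ch, ∃ ub ∈ S, ∀ z ∈ ch, z ≤ ub := by
    intro ch hchS hch y hy
    haveI : Nonempty ch := ⟨⟨y, hy⟩⟩
    set U : Ideal D := ⨆ (J : ch), (J : Ideal D) with hU
    have hdir : Directed (· ≤ ·) (fun J : ch => (J : Ideal D)) := by
      intro a b
      rcases hch.total a.2 b.2 with h | h
      · exact ⟨b, h, le_refl _⟩
      · exact ⟨a, le_refl _, h⟩
    have hmemU : ∀ {x : D}, x ∈ U ↔ ∃ J : ch, x ∈ (J : Ideal D) :=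
      fun {x} => Submodule.mem_iSup_of_directed _ hdir
    have hyU : y ≤ U := le_iSup (fun J : ch => (J : Ideal D)) ⟨y, hy⟩
    have hUne : U ≠ ⊥ := fun h => (hchS hy).1 (le_bot_iff.mp (h ▸ hyU))
    have hUcoene : (U : FractionalIdeal D⁰ K) ≠ 0 := by
      rw [Ne, FractionalIdeal.coeIdeal_eq_zero]; exact hUne
    have hUtop : U ≠ ⊤ := by
      intro h
      have h1 : (1 : D) ∈ U := by rw [h]; trivial
      obtain ⟨J, hJ⟩ := hmemU.mp h1
      exact (hchS J.2).2.1 ((Ideal.eq_top_iff_one _).mpr hJ)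
    refine ⟨U, ⟨hUne, hUtop, ?_⟩, fun z hz => le_iSup (fun J : ch => (J : Ideal D)) ⟨z, hz⟩⟩
    refine le_antisymm ?_ (s.le_star _ hUcoene)
    intro x hx
    obtain ⟨Hf, hHf0, hHfFG, hHfle, hxHf⟩ := hfc _ hUcoene x hx
    have hHfle1 : Hf ≤ 1 := le_trans hHfle FractionalIdeal.coeIdeal_le_one
    obtain ⟨h, hh⟩ := FractionalIdeal.le_one_iff_exists_coeIdeal.mp hHfle1
    have hhFG : h.FG := by
      apply Submodule.fg_of_fg_map_injective (Algebra.linearMap D K)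
        (IsFractionRing.injective D K)
      have : Submodule.map (Algebra.linearMap D K) h
          = ((h : FractionalIdeal D⁰ K) : Submodule D K) := rfl
      rw [this, hh]
      exact hHfFG
    obtain ⟨Tf, hTf⟩ := hhFG
    have hhU : h ≤ U := by
      rw [← hh] at hHfle
      exact (FractionalIdeal.coeIdeal_le_coeIdeal K).mp hHfle
    obtain ⟨J, hJch, hJT⟩ := finset_subset_chain_member hch hy Tf
      (fun t ht => by
        have : t ∈ U := hhU (hTf ▸ Submodule.subset_span ht)
        obtain ⟨J, hJ⟩ := hmemU.mp this
        exact ⟨J, J.2, hJ⟩)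
    have hhJ : h ≤ J := by
      rw [← hTf]
      exact Submodule.span_le.mpr fun t ht => hJT t ht
    have hJne : (J : FractionalIdeal D⁰ K) ≠ 0 := by
      rw [Ne, FractionalIdeal.coeIdeal_eq_zero]
      exact fun hJbot => (hchS hJch).1 hJbot
    have hxJ : x ∈ (J : FractionalIdeal D⁰ K) := by
      rw [← (hchS hJch).2.2]
      refine s.star_mono _ _ (by rw [← hh] at hHf0; exact hHf0) hJne ?_ (by rw [hh]; exact hxHf)
      exact (FractionalIdeal.coeIdeal_le_coeIdeal K).mpr hhJ
    have hJU : J ≤ U := le_iSup (fun J : ch => (J : Ideal D)) ⟨J, hJch⟩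
    exact (FractionalIdeal.coeIdeal_le_coeIdeal K).mpr hJU hxJ
  obtain ⟨m, hc₀m, hm⟩ := zorn_le_nonempty₀ S hchain c₀ ⟨hc₀0, hc₀top, hc₀star⟩
  refine ⟨m, ⟨hm.1.1, hm.1.2.1, hm.1.2.2, ?_⟩, le_trans hc₀c hc₀m⟩
  intro J hJtop hJstar hmJ
  have hJne : J ≠ ⊥ := fun h => hm.1.1 (le_bot_iff.mp (h ▸ hmJ))
  exact le_antisymm (hm.2 ⟨hJne, hJtop, hJstar⟩ hmJ) hmJ

lemma pred_le_star (s : StarOperation D K) (hfc : s.HasFiniteCharacter)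
    (I : Ideal D) (hI : I ≠ ⊥) (x : K)
    (hx : ∀ M : Ideal D, IsMaxStarIdealOp s.star M →
      ∃ u : D, u ∉ M ∧ u • x ∈ (I : FractionalIdeal D⁰ K)) :
    x ∈ s.star (I : FractionalIdeal D⁰ K) := by
  by_cases hx0 : x = 0
  · subst hx0
    exact (s.star (I : FractionalIdeal D⁰ K)).coeToSubmodule.zero_mem
  have hIne : (I : FractionalIdeal D⁰ K) ≠ 0 := by
    rw [Ne, FractionalIdeal.coeIdeal_eq_zero]; exact hI
  -- the conductor ideal
  set c : Ideal D := Submodule.comap (LinearMap.toSpanSingleton D K x)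
    ((I : FractionalIdeal D⁰ K) : Submodule D K) with hc
  have hmemc : ∀ u : D, u ∈ c ↔ u • x ∈ (I : FractionalIdeal D⁰ K) := by
    intro u
    rw [hc, Submodule.mem_comap]
    rfl
  -- c is nonzero
  obtain ⟨d, hdI, hd0⟩ := Submodule.exists_mem_ne_zero_of_ne_bot hI
  obtain ⟨p, q, hq, hpq⟩ := IsFractionRing.div_surjective (A := D) x
  have hq0 : algebraMap D K q ≠ 0 := IsFractionRing.to_map_ne_zero_of_mem_nonZeroDivisors hq
  have hqd : q * d ∈ c := by
    rw [hmemc]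
    have : (q * d) • x = algebraMap D K (d * p) := by
      rw [Algebra.smul_def, ← hpq]
      rw [map_mul, map_mul]
      field_simp
    rw [this]
    exact FractionalIdeal.mem_coeIdeal _ |>.mpr ⟨d * p, Ideal.mul_mem_right p I hdI, rfl⟩
  have hqd0 : q * d ≠ 0 := mul_ne_zero (nonZeroDivisors.ne_zero hq) hd0
  have hcne : c ≠ ⊥ := fun h => hqd0 (by rw [h] at hqd; simpa using hqd)
  have hccoene : (c : FractionalIdeal D⁰ K) ≠ 0 := by
    rw [Ne, FractionalIdeal.coeIdeal_eq_zero]; exact hcne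
  -- star c = 1
  have hstarc : s.star (c : FractionalIdeal D⁰ K) = 1 := by
    by_contra hne
    obtain ⟨M, hMmax, hcM⟩ := exists_max_star s hfc c hcne hne
    obtain ⟨u, huM, hux⟩ := hx M hMmax
    exact huM (hcM ((hmemc u).mpr hux))
  -- span x * c ≤ I
  have hspan : FractionalIdeal.spanSingleton D⁰ x * (c : FractionalIdeal D⁰ K)
      ≤ (I : FractionalIdeal D⁰ K) := by
    rw [FractionalIdeal.mul_le]
    intro i hi j hj
    obtain ⟨z, hz⟩ := (FractionalIdeal.mem_spanSingleton _).mp hi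
    obtain ⟨u, huc, hu⟩ := (FractionalIdeal.mem_coeIdeal _).mp hj
    have : i * j = z • (u • x) := by
      rw [← hz, ← hu, Algebra.smul_def, Algebra.smul_def, Algebra.smul_def]
      ring
    rw [this]
    exact Submodule.smul_mem _ z ((hmemc u).mp huc)
  have hsne : FractionalIdeal.spanSingleton D⁰ x ≠ 0 :=
    FractionalIdeal.spanSingleton_ne_zero_iff.mpr hx0
  have hprodne : FractionalIdeal.spanSingleton D⁰ x * (c : FractionalIdeal D⁰ K) ≠ 0 := by
    intro h
    have hmem : x * algebraMap D K (q * d) ∈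
        FractionalIdeal.spanSingleton D⁰ x * (c : FractionalIdeal D⁰ K) :=
      FractionalIdeal.mul_mem_mul (FractionalIdeal.mem_spanSingleton_self _ _)
        ((FractionalIdeal.mem_coeIdeal _).mpr ⟨q * d, hqd, rfl⟩)
    rw [h] at hmem
    have : x * algebraMap D K (q * d) = 0 := by simpa using hmem
    rcases mul_eq_zero.mp this with h' | h'
    · exact hx0 h'
    · exact hqd0 (IsFractionRing.injective D K (by rw [h', map_zero]))
  have hmono := s.star_mono _ _ hprodne hIne hspan
  rw [s.star_smul x hx0 _ hccoene, hstarc, mul_one] at hmono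
  exact hmono (FractionalIdeal.mem_spanSingleton_self _ _)

end StarLemmas

namespace RealVal

lemma e_pow {R : Type*} [CommRing R] [IsDomain R] (V : RealVal R) {σ : R} (hσ : σ ≠ 0) :
    ∀ k : ℕ, V.e (σ ^ k) = k * V.e σ := by
  intro k
  induction k with
  | zero => simpa using V.e_one
  | succ n ih =>
    rw [pow_succ, V.hmul _ _ (pow_ne_zero n hσ) hσ, ih]
    push_cast
    ring

lemma absorb {R : Type*} [CommRing R] [IsDomain R] (V : RealVal R) {C : Ideal R} (hC : C ≠ ⊥)
    {σ : R} (hσ0 : σ ≠ 0) (hσu : ¬IsUnit σ) (δ : R) : ∃ k : ℕ, σ ^ k * δ ∈ C := by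
  by_cases hδ : δ = 0
  · exact ⟨0, by simp [hδ]⟩
  obtain ⟨x, hxC, hx0⟩ := Submodule.exists_mem_ne_zero_of_ne_bot hC
  have hσpos : 0 < V.e σ := by
    by_contra hle
    push_neg at hle
    have : V.e σ ≤ V.e 1 := by rw [V.e_one]; exact hle
    exact hσu (isUnit_of_dvd_one ((V.hdvd σ 1 hσ0 one_ne_zero).mp this))
  obtain ⟨n, hn⟩ := Archimedean.arch (V.e x - V.e δ) hσpos
  have hne : σ ^ n * δ ≠ 0 := mul_ne_zero (pow_ne_zero n hσ0) hδ
  refine ⟨n, V.mem_of_le_e hxC hx0 hne ?_⟩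
  rw [V.hmul _ _ (pow_ne_zero n hσ0) hδ, V.e_pow hσ0]
  have : (V.e x - V.e δ) ≤ n * V.e σ := by
    have := hn; rwa [nsmul_eq_mul] at this
  linarith

end RealVal

section GlueLemmas

variable {D K : Type*} [CommRing D] [IsDomain D] [Field K] [Algebra D K] [IsFractionRing D K]

lemma map_loc_ne_bot {M : Ideal D} [M.IsPrime] {C : Ideal D} (hC : C ≠ ⊥) :
    Ideal.map (algebraMap D (Localization.AtPrime M)) C ≠ ⊥ := by
  obtain ⟨c, hcC, hc0⟩ := Submodule.exists_mem_ne_zero_of_ne_bot hC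
  intro h
  have hmem : algebraMap D (Localization.AtPrime M) c ∈
      Ideal.map (algebraMap D (Localization.AtPrime M)) C := Ideal.mem_map_of_mem _ hcC
  rw [h] at hmem
  have : algebraMap D (Localization.AtPrime M) c = 0 := hmem
  exact hc0 (IsLocalization.injective (Localization.AtPrime M)
    M.primeCompl_le_nonZeroDivisors (by rw [this, map_zero]))

lemma map_loc_eq_top {M : Ideal D} [M.IsPrime] {C : Ideal D} (h : ¬ C ≤ M) :
    Ideal.map (algebraMap D (Localization.AtPrime M)) C = ⊤ := by
  obtain ⟨d, hdC, hdM⟩ := SetLike.not_le_iff_exists.mp h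
  exact Ideal.eq_top_of_isUnit_mem _ (Ideal.mem_map_of_mem _ hdC)
    ((IsLocalization.AtPrime.isUnit_to_map_iff (Localization.AtPrime M) M d).mpr hdM)

lemma predM_congr {M : Ideal D} [M.IsPrime] {C C' : Ideal D}
    (h : Ideal.map (algebraMap D (Localization.AtPrime M)) C
       = Ideal.map (algebraMap D (Localization.AtPrime M)) C')
    (x : K) (hx : ∃ u : D, u ∉ M ∧ u • x ∈ (C : FractionalIdeal D⁰ K)) :
    ∃ u : D, u ∉ M ∧ u • x ∈ (C' : FractionalIdeal D⁰ K) := by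
  obtain ⟨u, huM, hux⟩ := hx
  obtain ⟨cc, hcc, hcx⟩ := (FractionalIdeal.mem_coeIdeal _).mp hux
  have h1 : algebraMap D (Localization.AtPrime M) cc ∈
      Ideal.map (algebraMap D (Localization.AtPrime M)) C' := by
    rw [← h]; exact Ideal.mem_map_of_mem _ hcc
  rw [IsLocalization.mem_map_algebraMap_iff M.primeCompl] at h1
  obtain ⟨⟨c', s'⟩, hcs⟩ := h1
  rw [← map_mul] at hcs
  obtain ⟨t, ht⟩ := (IsLocalization.eq_iff_exists M.primeCompl _).mp hcs
  refine ⟨(t : D) * (s' : D) * u, ?_, ?_⟩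
  · intro hmem
    have hP : M.IsPrime := inferInstance
    rcases hP.mem_or_mem hmem with h' | h'
    · rcases hP.mem_or_mem h' with h'' | h''
      · exact t.2 h''
      · exact s'.2 h''
    · exact huM h'
  · rw [FractionalIdeal.mem_coeIdeal]
    refine ⟨(t : D) * (c' : D), Ideal.mul_mem_left _ _ c'.2, ?_⟩
    have h2 : ((t : D) * (s' : D) * u) • x = ((t : D) * (s' : D)) • (u • x) := by
      rw [mul_smul]
    rw [h2, ← hcx, Algebra.smul_def, ← map_mul]
    congr 1
    calc (t : D) * (c' : D) = (t : D) * (cc * (s' : D)) := ht.symm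
    _ = (t : D) * (s' : D) * cc := by ring

end GlueLemmas

section Glue

variable {D K : Type*} [CommRing D] [IsDomain D] [Field K] [Algebra D K] [IsFractionRing D K]

lemma main_glue (s : StarOperation D K)
    (ha : ∀ x : D, x ≠ 0 → {M : Ideal D | IsMaxStarIdealOp s.star M ∧ x ∈ M}.Finite)
    (hb : ∀ M : Ideal D, IsMaxStarIdealOp s.star M → ∃ _ : M.IsPrime,
      ∃ _ : IsDomain (Localization.AtPrime M),
        IsCompleteValuationDomain (Localization.AtPrime M))
    (I A B : Ideal D) (hI : I ≠ ⊥) (hA : A ≠ ⊥) (hB : B ≠ ⊥) (hAB : A * B ≤ I) :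
    ∃ H J : Ideal D, H ≠ ⊥ ∧ J ≠ ⊥ ∧ A ≤ H ∧ B ≤ J ∧
      (∀ M : Ideal D, IsMaxStarIdealOp s.star M → ∃ _ : M.IsPrime,
        Ideal.map (algebraMap D (Localization.AtPrime M)) I
          = Ideal.map (algebraMap D (Localization.AtPrime M)) (H * J)) := by
  classical
  set T : Set (Ideal D) := {M | IsMaxStarIdealOp s.star M ∧ I ≤ M} with hT
  obtain ⟨a₀, ha₀I, ha₀0⟩ := Submodule.exists_mem_ne_zero_of_ne_bot hI
  have hTfin : T.Finite := (ha a₀ ha₀0).subset (fun M hM => ⟨hM.1, hM.2 ha₀I⟩)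
  have key : ∀ M, M ∈ T → ∃ p : M.IsPrime, ∃ hM jM : Ideal (Localization.AtPrime M),
      hM * jM = Ideal.map (algebraMap D (Localization.AtPrime M)) I ∧
      Ideal.map (algebraMap D (Localization.AtPrime M)) A ≤ hM ∧
      Ideal.map (algebraMap D (Localization.AtPrime M)) B ≤ jM ∧
      Ideal.map (algebraMap D (Localization.AtPrime M)) I ≤ hM ∧
      Ideal.map (algebraMap D (Localization.AtPrime M)) I ≤ jM ∧
      (∀ σ : D, σ ∈ M → σ ≠ 0 → ∀ δ : D, ∃ k : ℕ,
        algebraMap D (Localization.AtPrime M) (σ ^ k * δ) ∈ hM ⊓ jM) := by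
    intro M hM
    obtain ⟨p, dom, hcv⟩ := hb M hM.1
    refine ⟨p, ?_⟩
    obtain ⟨V⟩ := exists_realVal _ hcv
    obtain ⟨h', j', hfac, hAh, hBj, hIh, hIj⟩ :=
      V.factor (Ideal.map (algebraMap D (Localization.AtPrime M)) A)
        (Ideal.map (algebraMap D (Localization.AtPrime M)) B)
        (Ideal.map (algebraMap D (Localization.AtPrime M)) I)
        (map_loc_ne_bot hA) (map_loc_ne_bot hB) (map_loc_ne_bot hI)
        (by rw [← Ideal.map_mul]; exact Ideal.map_mono hAB)
    refine ⟨h', j', hfac, hAh, hBj, hIh, hIj, ?_⟩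
    intro σ hσM hσ0 δ
    have hinf : h' ⊓ j' ≠ ⊥ := by
      intro hbot
      exact map_loc_ne_bot hI (le_bot_iff.mp (hbot ▸ le_inf hIh hIj))
    have hσ0' : algebraMap D (Localization.AtPrime M) σ ≠ 0 := fun h0 =>
      hσ0 (IsLocalization.injective (Localization.AtPrime M)
        M.primeCompl_le_nonZeroDivisors (by rw [h0, map_zero]))
    have hσu : ¬ IsUnit (algebraMap D (Localization.AtPrime M) σ) := by
      rw [IsLocalization.AtPrime.isUnit_to_map_iff (Localization.AtPrime M) M σ]
      exact fun hc => hc hσM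
    obtain ⟨k, hk⟩ := V.absorb hinf hσ0' hσu (algebraMap D (Localization.AtPrime M) δ)
    exact ⟨k, by rw [map_mul, map_pow]; exact hk⟩
  choose p hId jId hfac hA' hB' hIh hIj habs using key
  set H : Ideal D := ⨅ (M : Ideal D), ⨅ (hM : M ∈ T),
      Ideal.comap (algebraMap D (@Localization.AtPrime D _ M (p M hM))) (hId M hM) with hH
  set J : Ideal D := ⨅ (M : Ideal D), ⨅ (hM : M ∈ T),
      Ideal.comap (algebraMap D (@Localization.AtPrime D _ M (p M hM))) (jId M hM) with hJ
  have hIH : I ≤ H := le_iInf fun M => le_iInf fun hM =>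
    Ideal.map_le_iff_le_comap.mp (hIh M hM)
  have hIJ : I ≤ J := le_iInf fun M => le_iInf fun hM =>
    Ideal.map_le_iff_le_comap.mp (hIj M hM)
  have hAH : A ≤ H := le_iInf fun M => le_iInf fun hM =>
    Ideal.map_le_iff_le_comap.mp (hA' M hM)
  have hBJ : B ≤ J := le_iInf fun M => le_iInf fun hM =>
    Ideal.map_le_iff_le_comap.mp (hB' M hM)
  have hHne : H ≠ ⊥ := fun h => hI (le_bot_iff.mp (h ▸ hIH))
  have hJne : J ≠ ⊥ := fun h => hI (le_bot_iff.mp (h ▸ hIJ))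
  have mapEq : ∀ (Fam : ∀ M (hM : M ∈ T), Ideal (@Localization.AtPrime D _ M (p M hM))),
      (∀ M (hM : M ∈ T), Fam M hM = hId M hM ∨ Fam M hM = jId M hM) →
      ∀ M₀ (h₀ : M₀ ∈ T),
      Ideal.map (algebraMap D (@Localization.AtPrime D _ M₀ (p M₀ h₀)))
          (⨅ (M : Ideal D), ⨅ (hM : M ∈ T),
            Ideal.comap (algebraMap D (@Localization.AtPrime D _ M (p M hM))) (Fam M hM))
        = Fam M₀ h₀ := by
    intro Fam hFam M₀ h₀
    haveI := p M₀ h₀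
    apply le_antisymm
    · calc Ideal.map (algebraMap D (Localization.AtPrime M₀))
            (⨅ (M : Ideal D), ⨅ (hM : M ∈ T),
              Ideal.comap (algebraMap D (@Localization.AtPrime D _ M (p M hM))) (Fam M hM))
          ≤ Ideal.map (algebraMap D (Localization.AtPrime M₀))
            (Ideal.comap (algebraMap D (Localization.AtPrime M₀)) (Fam M₀ h₀)) :=
            Ideal.map_mono (le_trans (iInf_le _ M₀) (iInf_le _ h₀))
      _ = Fam M₀ h₀ := IsLocalization.map_comap M₀.primeCompl _ _
    · conv_lhs => rw [← IsLocalization.map_comap M₀.primeCompl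
        (Localization.AtPrime M₀) (Fam M₀ h₀)]
      rw [Ideal.map_le_iff_le_comap]
      intro d hd
      rw [Ideal.mem_comap] at hd ⊢
      have main : ∀ (Ts : Set (Ideal D)), Ts.Finite → Ts ⊆ T \ {M₀} →
          ∃ w : D, w ∉ M₀ ∧ ∀ M (hM : M ∈ T), M ∈ Ts →
            w * d ∈ Ideal.comap (algebraMap D (@Localization.AtPrime D _ M (p M hM)))
              (hId M hM ⊓ jId M hM) := by
        intro Ts hfin
        refine Set.Finite.induction_on Ts hfin ?_ ?_
        · intro _
          refine ⟨1, ?_, by simp⟩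
          intro h1
          exact h₀.1.2.1 ((Ideal.eq_top_iff_one _).mpr h1)
        · intro a Ts' hanot hfin' IH hsub
          have haT : a ∈ T := (hsub (Set.mem_insert a Ts')).1
          have haM₀ : a ≠ M₀ := (hsub (Set.mem_insert a Ts')).2
          obtain ⟨w₀, hw₀M₀, hw₀⟩ := IH (le_trans (Set.subset_insert a Ts') hsub)
          have hnle : ¬ a ≤ M₀ := by
            intro hle
            exact haM₀ (haT.1.2.2.2 M₀ h₀.1.2.1 h₀.1.2.2.1 hle).symm
          obtain ⟨σ, hσa, hσM₀⟩ := SetLike.not_le_iff_exists.mp hnle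
          have hσ0 : σ ≠ 0 := fun h => hσM₀ (h ▸ M₀.zero_mem)
          obtain ⟨k, hk⟩ := habs a haT σ hσa hσ0 (w₀ * d)
          refine ⟨σ ^ k * w₀, ?_, ?_⟩
          · intro hmem
            haveI hp₀ : M₀.IsPrime := p M₀ h₀
            rcases hp₀.mem_or_mem hmem with h' | h'
            · exact hσM₀ (hp₀.mem_of_pow_mem k h')
            · exact hw₀M₀ h'
          · intro M hM hMmem
            rcases Set.mem_insert_iff.mp hMmem with rfl | hMmem'
            · rw [Ideal.mem_comap]
              rw [show σ ^ k * w₀ * d = σ ^ k * (w₀ * d) by ring]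
              exact hk
            · have := hw₀ M hM hMmem'
              rw [show σ ^ k * w₀ * d = σ ^ k * (w₀ * d) by ring]
              exact Ideal.mul_mem_left _ _ this
      obtain ⟨w, hwM₀, hw⟩ := main (T \ {M₀}) (hTfin.subset Set.diff_subset) subset_rfl
      have hwd : w * d ∈ ⨅ (M : Ideal D), ⨅ (hM : M ∈ T),
          Ideal.comap (algebraMap D (@Localization.AtPrime D _ M (p M hM))) (Fam M hM) := by
        rw [Submodule.mem_iInf]
        intro M
        rw [Submodule.mem_iInf]
        intro hM
        by_cases hMM₀ : M = M₀
        · subst hMM₀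
          exact Ideal.mul_mem_left _ w hd
        · have hmem := hw M hM ⟨hM, hMM₀⟩
          rw [Ideal.mem_comap] at hmem ⊢
          rcases hFam M hM with hF | hF
          · rw [hF]; exact (inf_le_left : hId M hM ⊓ jId M hM ≤ _) hmem
          · rw [hF]; exact (inf_le_right : hId M hM ⊓ jId M hM ≤ _) hmem
      have hunit : IsUnit (algebraMap D (Localization.AtPrime M₀) w) :=
        IsLocalization.map_units (Localization.AtPrime M₀) (⟨w, hwM₀⟩ : M₀.primeCompl)
      obtain ⟨uu, huu⟩ := hunit
      have heq : algebraMap D (Localization.AtPrime M₀) d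
          = ↑uu⁻¹ * algebraMap D (Localization.AtPrime M₀) (w * d) := by
        rw [map_mul, ← huu, Units.inv_mul_cancel_left]
      rw [heq]
      exact Ideal.mul_mem_left _ _ (Ideal.mem_map_of_mem _ hwd)
  have mapH : ∀ M₀ (h₀ : M₀ ∈ T),
      Ideal.map (algebraMap D (@Localization.AtPrime D _ M₀ (p M₀ h₀))) H = hId M₀ h₀ :=
    mapEq hId (fun _ _ => Or.inl rfl)
  have mapJ : ∀ M₀ (h₀ : M₀ ∈ T),
      Ideal.map (algebraMap D (@Localization.AtPrime D _ M₀ (p M₀ h₀))) J = jId M₀ h₀ :=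
    mapEq jId (fun _ _ => Or.inr rfl)
  refine ⟨H, J, hHne, hJne, hAH, hBJ, ?_⟩
  intro M hMmax
  by_cases hMT : I ≤ M
  · have hMT' : M ∈ T := ⟨hMmax, hMT⟩
    refine ⟨p M hMT', ?_⟩
    haveI := p M hMT'
    rw [Ideal.map_mul, mapH M hMT', mapJ M hMT', hfac M hMT']
  · obtain ⟨pM, dom, _⟩ := hb M hMmax
    refine ⟨pM, ?_⟩
    obtain ⟨d, hdI, hdM⟩ := SetLike.not_le_iff_exists.mp hMT
    have hd2 : ¬ H * J ≤ M := by
      intro hle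
      have : d * d ∈ M := hle (Ideal.mul_mem_mul (hIH hdI) (hIJ hdI))
      rcases pM.mem_or_mem this with h' | h' <;> exact hdM h'
    rw [map_loc_eq_top hMT, map_loc_eq_top hd2]

end Glue

/-- Let `*` be a star operation of finite character on `D` such
that (a) every nonzero element of `D` lies in only finitely many maximal `*`-ideals
and (b) for every maximal `*`-ideal `M`, `D_M` is a valuation domain with value
group a complete subgroup of the reals. Then `D` is `~*`-sharp (where
`I^{~*} = ⋂_M I·D_M`, over the maximal `*`-ideals `M`) and hence `*`-sharp. -/
theorem statement9 (D : Type*) [CommRing D] [IsDomain D]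
    (K : Type*) [Field K] [Algebra D K] [IsFractionRing D K]
    (s : StarOperation D K) (hfc : s.HasFiniteCharacter)
    (ha : ∀ x : D, x ≠ 0 → {M : Ideal D | IsMaxStarIdealOp s.star M ∧ x ∈ M}.Finite)
    (hb : ∀ M : Ideal D, IsMaxStarIdealOp s.star M → ∃ _ : M.IsPrime,
      ∃ _ : IsDomain (Localization.AtPrime M),
        IsCompleteValuationDomain (Localization.AtPrime M)) :
    (∀ ts : StarOperation D K,
      (∀ I : FractionalIdeal D⁰ K, I ≠ 0 → ∀ x : K,
        (x ∈ ts.star I ↔ ∀ M : Ideal D, IsMaxStarIdealOp s.star M →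
          ∃ u : D, u ∉ M ∧ u • x ∈ I)) →
      ts.IsSharp) ∧
    s.IsSharp := by
  classical
  -- common setup: the predicate equivalence coming from the glue lemma
  have glue := main_glue s ha hb
  have predmain : ∀ I A B : Ideal D, I ≠ ⊥ → A ≠ ⊥ → B ≠ ⊥ → A * B ≤ I →
      ∃ H J : Ideal D, H ≠ ⊥ ∧ J ≠ ⊥ ∧ A ≤ H ∧ B ≤ J ∧
        ∀ x : K, (∀ M : Ideal D, IsMaxStarIdealOp s.star M →
            ∃ u : D, u ∉ M ∧ u • x ∈ (I : FractionalIdeal D⁰ K)) ↔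
          (∀ M : Ideal D, IsMaxStarIdealOp s.star M →
            ∃ u : D, u ∉ M ∧ u • x ∈ ((H * J : Ideal D) : FractionalIdeal D⁰ K)) := by
    intro I A B hI hA hB hAB
    obtain ⟨H, J, hHne, hJne, hAH, hBJ, hmap⟩ := glue I A B hI hA hB hAB
    refine ⟨H, J, hHne, hJne, hAH, hBJ, ?_⟩
    intro x
    constructor
    · intro hpred M hMmax
      obtain ⟨pM, hmapM⟩ := hmap M hMmax
      exact predM_congr hmapM x (hpred M hMmax)
    · intro hpred M hMmax
      obtain ⟨pM, hmapM⟩ := hmap M hMmax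
      exact predM_congr hmapM.symm x (hpred M hMmax)
  have one_notmem : ∀ M : Ideal D, IsMaxStarIdealOp s.star M → (1 : D) ∉ M := by
    intro M hMmax h1
    exact hMmax.2.1 ((Ideal.eq_top_iff_one _).mpr h1)
  constructor
  · -- `~*`-sharpness
    intro ts hts
    intro I A B hI hA hB hAB
    have hI' : I ≠ ⊥ := by rwa [← Submodule.zero_eq_bot]
    have hA' : A ≠ ⊥ := by rwa [← Submodule.zero_eq_bot]
    have hB' : B ≠ ⊥ := by rwa [← Submodule.zero_eq_bot]
    obtain ⟨H, J, hHne, hJne, hAH, hBJ, hpred⟩ := predmain I A B hI' hA' hB' hAB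
    have hIne : (I : FractionalIdeal D⁰ K) ≠ 0 := by
      rw [Ne, FractionalIdeal.coeIdeal_eq_zero]; exact hI'
    have hHJne : (H * J : Ideal D) ≠ ⊥ := by
      rw [Ne, Ideal.mul_eq_bot]
      rintro (h | h)
      · exact hHne h
      · exact hJne h
    have hHJcne : ((H * J : Ideal D) : FractionalIdeal D⁰ K) ≠ 0 := by
      rw [Ne, FractionalIdeal.coeIdeal_eq_zero]; exact hHJne
    have hHcne : (H : FractionalIdeal D⁰ K) ≠ 0 := by
      rw [Ne, FractionalIdeal.coeIdeal_eq_zero]; exact hHne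
    have hJcne : (J : FractionalIdeal D⁰ K) ≠ 0 := by
      rw [Ne, FractionalIdeal.coeIdeal_eq_zero]; exact hJne
    refine ⟨H, J, by rwa [Submodule.zero_eq_bot], by rwa [Submodule.zero_eq_bot], ?_, ?_, ?_⟩
    · rw [← FractionalIdeal.coeIdeal_mul]
      apply le_antisymm
      · intro x hx
        exact (hts _ hHJcne x).mpr ((hpred x).mp ((hts _ hIne x).mp hx))
      · intro x hx
        exact (hts _ hIne x).mpr ((hpred x).mpr ((hts _ hHJcne x).mp hx))
    · exact le_trans ((FractionalIdeal.coeIdeal_le_coeIdeal K).mpr hAH) (ts.le_star _ hHcne)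
    · exact le_trans ((FractionalIdeal.coeIdeal_le_coeIdeal K).mpr hBJ) (ts.le_star _ hJcne)
  · -- `*`-sharpness
    intro I A B hI hA hB hAB
    have hI' : I ≠ ⊥ := by rwa [← Submodule.zero_eq_bot]
    have hA' : A ≠ ⊥ := by rwa [← Submodule.zero_eq_bot]
    have hB' : B ≠ ⊥ := by rwa [← Submodule.zero_eq_bot]
    obtain ⟨H, J, hHne, hJne, hAH, hBJ, hpred⟩ := predmain I A B hI' hA' hB' hAB
    have hIne : (I : FractionalIdeal D⁰ K) ≠ 0 := by
      rw [Ne, FractionalIdeal.coeIdeal_eq_zero]; exact hI'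
    have hHJne : (H * J : Ideal D) ≠ ⊥ := by
      rw [Ne, Ideal.mul_eq_bot]
      rintro (h | h)
      · exact hHne h
      · exact hJne h
    have hHJcne : ((H * J : Ideal D) : FractionalIdeal D⁰ K) ≠ 0 := by
      rw [Ne, FractionalIdeal.coeIdeal_eq_zero]; exact hHJne
    have hHcne : (H : FractionalIdeal D⁰ K) ≠ 0 := by
      rw [Ne, FractionalIdeal.coeIdeal_eq_zero]; exact hHne
    have hJcne : (J : FractionalIdeal D⁰ K) ≠ 0 := by
      rw [Ne, FractionalIdeal.coeIdeal_eq_zero]; exact hJne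
    have hIpred : ∀ x : K, x ∈ (I : FractionalIdeal D⁰ K) →
        ∀ M : Ideal D, IsMaxStarIdealOp s.star M →
          ∃ u : D, u ∉ M ∧ u • x ∈ (I : FractionalIdeal D⁰ K) := by
      intro x hx M hMmax
      exact ⟨1, one_notmem M hMmax, by rwa [one_smul]⟩
    have hHJpred : ∀ x : K, x ∈ ((H * J : Ideal D) : FractionalIdeal D⁰ K) →
        ∀ M : Ideal D, IsMaxStarIdealOp s.star M →
          ∃ u : D, u ∉ M ∧ u • x ∈ ((H * J : Ideal D) : FractionalIdeal D⁰ K) := by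
      intro x hx M hMmax
      exact ⟨1, one_notmem M hMmax, by rwa [one_smul]⟩
    have h1 : (I : FractionalIdeal D⁰ K) ≤
        s.star ((H * J : Ideal D) : FractionalIdeal D⁰ K) := by
      intro x hx
      exact pred_le_star s hfc _ hHJne x ((hpred x).mp (hIpred x hx))
    have h2 : ((H * J : Ideal D) : FractionalIdeal D⁰ K) ≤
        s.star (I : FractionalIdeal D⁰ K) := by
      intro x hx
      exact pred_le_star s hfc _ hI' x ((hpred x).mpr (hHJpred x hx))
    have hstarIne : s.star (I : FractionalIdeal D⁰ K) ≠ 0 := by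
      intro h0
      have := s.le_star _ hIne
      rw [h0] at this
      rw [← FractionalIdeal.bot_eq_zero] at this
      exact hIne (by rw [le_bot_iff.mp this, FractionalIdeal.bot_eq_zero])
    have hstarHJne : s.star ((H * J : Ideal D) : FractionalIdeal D⁰ K) ≠ 0 := by
      intro h0
      have := s.le_star _ hHJcne
      rw [h0] at this
      rw [← FractionalIdeal.bot_eq_zero] at this
      exact hHJcne (by rw [le_bot_iff.mp this, FractionalIdeal.bot_eq_zero])
    refine ⟨H, J, by rwa [Submodule.zero_eq_bot], by rwa [Submodule.zero_eq_bot], ?_, ?_, ?_⟩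
    · rw [← FractionalIdeal.coeIdeal_mul]
      apply le_antisymm
      · have := s.star_mono _ _ hIne hstarHJne h1
        rwa [s.star_star _ hHJcne] at this
      · have := s.star_mono _ _ hHJcne hstarIne h2
        rwa [s.star_star _ hIne] at this
    · refine le_trans ((FractionalIdeal.coeIdeal_le_coeIdeal K).mpr hAH) (s.le_star _ hHcne)
    · refine le_trans ((FractionalIdeal.coeIdeal_le_coeIdeal K).mpr hBJ) (s.le_star _ hJcne)
end

section
/- An integral domain D is t-sharp if and only if D is w-sharp. -/
open scoped nonZeroDivisors

section StarSharpDefs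

variable {D K : Type*} [CommRing D] [IsDomain D] [Field K] [Algebra D K] [IsFractionRing D K]

lemma inv_ne_zero' {I : FractionalIdeal D⁰ K} (hI : I ≠ 0) : I⁻¹ ≠ 0 := by
  obtain ⟨d, hd, hdI⟩ := I.isFractional
  have hmem : algebraMap D K d ∈ I⁻¹ := by
    rw [FractionalIdeal.mem_inv_iff hI]
    intro y hy
    obtain ⟨c, hc⟩ := hdI y hy
    refine ⟨c, trivial, ?_⟩
    simpa [Algebra.smul_def] using hc
  intro h0
  rw [h0] at hmem
  have : algebraMap D K d ≠ 0 :=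
    IsFractionRing.to_map_ne_zero_of_mem_nonZeroDivisors hd
  exact this (by simpa using hmem)

/-- The `v`-operation `I ↦ I_v = (I⁻¹)⁻¹`. -/
noncomputable def vOp (I : FractionalIdeal D⁰ K) : FractionalIdeal D⁰ K := (I⁻¹)⁻¹

lemma vOp_mono {I J : FractionalIdeal D⁰ K} (h : I ≤ J) : vOp I ≤ vOp J := by
  rcases eq_or_ne I 0 with rfl | hI
  · show ((0 : FractionalIdeal D⁰ K)⁻¹)⁻¹ ≤ vOp J
    rw [FractionalIdeal.inv_zero', FractionalIdeal.inv_zero']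
    exact FractionalIdeal.zero_le _
  have hJ : J ≠ 0 := fun hJ0 => hI (le_antisymm (hJ0 ▸ h) (FractionalIdeal.zero_le I))
  exact FractionalIdeal.inv_anti_mono (inv_ne_zero' hJ) (inv_ne_zero' hI)
    (FractionalIdeal.inv_anti_mono hI hJ h)

/-- The `t`-operation: `I_t` is the union of `H_v` over the finitely generated
subideals `H` of `I`. -/
noncomputable def tOp (I : FractionalIdeal D⁰ K) : FractionalIdeal D⁰ K :=
  ⟨⨆ J : {J : FractionalIdeal D⁰ K // (J : Submodule D K).FG ∧ J ≤ I},
      ((vOp (J : FractionalIdeal D⁰ K) : FractionalIdeal D⁰ K) : Submodule D K),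
    FractionalIdeal.isFractional_of_le (J := vOp I)
      (iSup_le fun J => FractionalIdeal.coe_le_coe.2 (vOp_mono J.2.2))⟩

lemma ne_zero_of_inv_eq_one {H : FractionalIdeal D⁰ K} (hH : H⁻¹ = 1) : H ≠ 0 := by
  intro h0
  rw [h0, FractionalIdeal.inv_zero'] at hH
  exact zero_ne_one hH

lemma div_le_vOp {I : FractionalIdeal D⁰ K} {H : FractionalIdeal D⁰ K} (hH : H⁻¹ = 1) :
    I / H ≤ vOp I := by
  have hHne : H ≠ 0 := ne_zero_of_inv_eq_one hH
  intro x hx'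
  have hx : ∀ y ∈ H, x * y ∈ I :=
    (FractionalIdeal.mem_div_iff_of_ne_zero hHne).1 hx'
  show x ∈ vOp I
  rcases eq_or_ne I 0 with rfl | hI
  · obtain ⟨y, hy, hy0⟩ : ∃ y ∈ H, y ≠ 0 := by
      by_contra hcon
      push_neg at hcon
      exact hHne (FractionalIdeal.eq_zero_iff.2 hcon)
    have : x * y = 0 := by
      have := hx y hy
      simpa using FractionalIdeal.eq_zero_iff.1 rfl _ this
    have hx0 : x = 0 := by
      rcases mul_eq_zero.1 this with h | h
      · exact h
      · exact absurd h hy0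
    rw [hx0]
    exact FractionalIdeal.mem_coe.1
      (Submodule.zero_mem ((vOp (0 : FractionalIdeal D⁰ K) : FractionalIdeal D⁰ K) : Submodule D K))
  show x ∈ (I⁻¹)⁻¹
  rw [FractionalIdeal.mem_inv_iff (inv_ne_zero' hI)]
  intro z hz
  rw [FractionalIdeal.mem_inv_iff hI] at hz
  have : x * z ∈ H⁻¹ := by
    rw [FractionalIdeal.mem_inv_iff hHne]
    intro y hy
    have h1 : z * (x * y) ∈ (1 : FractionalIdeal D⁰ K) := hz _ (hx y hy)
    have : x * z * y = z * (x * y) := by ring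
    rw [this]
    exact h1
  rw [hH] at this
  exact this

/-- The `w`-operation: `I_w = {x ∈ K ∣ xH ⊆ I` for some finitely generated ideal
`H` of `D` with `H⁻¹ = D}`. -/
noncomputable def wOp (I : FractionalIdeal D⁰ K) : FractionalIdeal D⁰ K :=
  ⟨⨆ H : {H : Ideal D // H.FG ∧ ((H : FractionalIdeal D⁰ K))⁻¹ = 1},
      ((I / ((H : Ideal D) : FractionalIdeal D⁰ K) : FractionalIdeal D⁰ K) : Submodule D K),
    FractionalIdeal.isFractional_of_le (J := vOp I)
      (iSup_le fun H => FractionalIdeal.coe_le_coe.2 (div_le_vOp H.2.2))⟩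

end StarSharpDefs

section StarSharpProof

variable {D K : Type*} [CommRing D] [IsDomain D] [Field K] [Algebra D K] [IsFractionRing D K]

open FractionalIdeal

private lemma vOp_zero : vOp (0 : FractionalIdeal D⁰ K) = 0 := by
  show ((0 : FractionalIdeal D⁰ K)⁻¹)⁻¹ = 0
  rw [inv_zero', inv_zero']

private lemma le_vOp (X : FractionalIdeal D⁰ K) : X ≤ vOp X := by
  rcases eq_or_ne X 0 with rfl | hX
  · rw [vOp_zero]
  · intro x hx
    show x ∈ (X⁻¹)⁻¹
    rw [mem_inv_iff (inv_ne_zero' hX)]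
    intro y hy
    rw [mem_inv_iff hX] at hy
    rw [mul_comm]; exact hy x hx

private lemma mul_inv_le_one' (X : FractionalIdeal D⁰ K) : X * X⁻¹ ≤ 1 := by
  rcases eq_or_ne X 0 with rfl | hX
  · rw [inv_zero', mul_zero]; exact zero_le _
  · rw [inv_eq, mul_comm]
    exact (le_div_iff_mul_le hX).mp le_rfl

private lemma le_inv_of_mul_le_one {X Y : FractionalIdeal D⁰ K} (hY : Y ≠ 0)
    (h : X * Y ≤ 1) : X ≤ Y⁻¹ := by
  rw [inv_eq]
  exact (le_div_iff_mul_le hY).mpr h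

private lemma fmul_mono {X X' Y Y' : FractionalIdeal D⁰ K} (h1 : X ≤ X') (h2 : Y ≤ Y') :
    X * Y ≤ X' * Y' :=
  mul_le.mpr fun _ hi _ hj => mul_mem_mul (h1 hi) (h2 hj)

private lemma exists_ne_zero_mem {X : FractionalIdeal D⁰ K} (hX : X ≠ 0) :
    ∃ x ∈ X, x ≠ (0 : K) := by
  by_contra h; push_neg at h; exact hX (eq_zero_iff.2 h)

private lemma fmul_ne_zero {X Y : FractionalIdeal D⁰ K} (hX : X ≠ 0) (hY : Y ≠ 0) :
    X * Y ≠ 0 := by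
  obtain ⟨x, hx, hx0⟩ := exists_ne_zero_mem hX
  obtain ⟨y, hy, hy0⟩ := exists_ne_zero_mem hY
  intro h0
  exact mul_ne_zero hx0 hy0 (eq_zero_iff.1 h0 _ (mul_mem_mul hx hy))

private lemma vOp_ne_zero {X : FractionalIdeal D⁰ K} (hX : X ≠ 0) : vOp X ≠ 0 :=
  inv_ne_zero' (inv_ne_zero' hX)

private lemma inv_vOp (X : FractionalIdeal D⁰ K) : (vOp X)⁻¹ = X⁻¹ := by
  rcases eq_or_ne X 0 with rfl | hX
  · rw [vOp_zero]
  · refine le_antisymm (inv_anti_mono hX (vOp_ne_zero hX) (le_vOp X)) ?_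
    exact le_vOp (X⁻¹)

private lemma vOp_of_mul_eq_one {P Q : FractionalIdeal D⁰ K} (h : P * Q = 1) :
    vOp P = P := by
  have hq : Q = P⁻¹ := right_inverse_eq K P Q h
  have hp : P = Q⁻¹ := right_inverse_eq K Q P (by rw [mul_comm]; exact h)
  show (P⁻¹)⁻¹ = P
  rw [← hq, ← hp]

private lemma inv_unit_mul {P Q Y : FractionalIdeal D⁰ K} (hPQ : P * Q = 1) (hY : Y ≠ 0) :
    (P * Y)⁻¹ = Q * Y⁻¹ := by
  have hP : P ≠ 0 := by
    intro h; rw [h, zero_mul] at hPQ; exact zero_ne_one hPQ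
  have hPY : P * Y ≠ 0 := fmul_ne_zero hP hY
  refine le_antisymm ?_ ?_
  · have h1 : P * (P * Y)⁻¹ ≤ Y⁻¹ := by
      refine le_inv_of_mul_le_one hY ?_
      calc P * (P * Y)⁻¹ * Y = (P * Y) * (P * Y)⁻¹ := by ring
        _ ≤ 1 := mul_inv_le_one' _
    calc (P * Y)⁻¹ = (Q * P) * (P * Y)⁻¹ := by rw [mul_comm P Q] at hPQ; rw [hPQ, one_mul]
      _ = Q * (P * (P * Y)⁻¹) := by ring
      _ ≤ Q * Y⁻¹ := fmul_mono le_rfl h1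
  · refine le_inv_of_mul_le_one hPY ?_
    calc Q * Y⁻¹ * (P * Y) = (Q * P) * (Y * Y⁻¹) := by ring
      _ ≤ 1 * 1 := by
          rw [mul_comm P Q] at hPQ; rw [hPQ]
          exact fmul_mono le_rfl (mul_inv_le_one' Y)
      _ = 1 := one_mul 1

private lemma spanSingleton_mul_inv_self {x : K} (hx : x ≠ 0) :
    spanSingleton D⁰ x * spanSingleton D⁰ x⁻¹ = 1 := by
  rw [spanSingleton_mul_spanSingleton, mul_inv_cancel₀ hx, spanSingleton_one]

private lemma vOp_unit_mul {x : K} (hx : x ≠ 0) (Y : FractionalIdeal D⁰ K) :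
    vOp (spanSingleton D⁰ x * Y) = spanSingleton D⁰ x * vOp Y := by
  rcases eq_or_ne Y 0 with rfl | hY
  · rw [mul_zero, vOp_zero, mul_zero]
  · show ((spanSingleton D⁰ x * Y)⁻¹)⁻¹ = spanSingleton D⁰ x * (Y⁻¹)⁻¹
    rw [inv_unit_mul (spanSingleton_mul_inv_self hx) hY,
      inv_unit_mul (by rw [mul_comm]; exact spanSingleton_mul_inv_self hx) (inv_ne_zero' hY)]

private lemma vOp_vOp_mul (X Y : FractionalIdeal D⁰ K) :
    vOp (vOp X * Y) = vOp (X * Y) := by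
  rcases eq_or_ne X 0 with rfl | hX
  · rw [vOp_zero, zero_mul]
  rcases eq_or_ne Y 0 with rfl | hY
  · rw [mul_zero, mul_zero]
  suffices h : (vOp X * Y)⁻¹ = (X * Y)⁻¹ by
    show ((vOp X * Y)⁻¹)⁻¹ = ((X * Y)⁻¹)⁻¹
    rw [h]
  refine le_antisymm ?_ ?_
  · exact inv_anti_mono (fmul_ne_zero hX hY) (fmul_ne_zero (vOp_ne_zero hX) hY)
      (fmul_mono (le_vOp X) le_rfl)
  · refine le_inv_of_mul_le_one (fmul_ne_zero (vOp_ne_zero hX) hY) ?_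
    have h1 : (X * Y)⁻¹ * Y ≤ X⁻¹ := by
      refine le_inv_of_mul_le_one hX ?_
      calc (X * Y)⁻¹ * Y * X = (X * Y) * (X * Y)⁻¹ := by ring
        _ ≤ 1 := mul_inv_le_one' _
    calc (X * Y)⁻¹ * (vOp X * Y) = ((X * Y)⁻¹ * Y) * (X⁻¹)⁻¹ := by
          show _ = _ * vOp X; ring
      _ ≤ X⁻¹ * (X⁻¹)⁻¹ := fmul_mono h1 le_rfl
      _ ≤ 1 := mul_inv_le_one' _

private lemma one_le_inv_of_le_one' {X : FractionalIdeal D⁰ K} (hX : X ≠ 0) (h : X ≤ 1) :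
    (1 : FractionalIdeal D⁰ K) ≤ X⁻¹ :=
  le_inv_of_mul_le_one hX (by rw [one_mul]; exact h)

private lemma mem_div_iff_span {I J : FractionalIdeal D⁰ K} (hJ : J ≠ 0) {x : K} :
    x ∈ I / J ↔ spanSingleton D⁰ x * J ≤ I := by
  rw [← spanSingleton_le_iff_mem, le_div_iff_mul_le hJ]

end StarSharpProof

section StarSharpProofB

variable {D K : Type*} [CommRing D] [IsDomain D] [Field K] [Algebra D K] [IsFractionRing D K]

open FractionalIdeal

private lemma mem_tOp_iff {I : FractionalIdeal D⁰ K} {x : K} :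
    x ∈ tOp I ↔ ∃ F : FractionalIdeal D⁰ K,
      (F : Submodule D K).FG ∧ F ≤ I ∧ x ∈ vOp F := by
  haveI : Nonempty {J : FractionalIdeal D⁰ K // (J : Submodule D K).FG ∧ J ≤ I} :=
    ⟨⟨0, by rw [coe_zero]; exact Submodule.fg_bot, zero_le _⟩⟩
  have hdir : Directed (· ≤ ·)
      (fun J : {J : FractionalIdeal D⁰ K // (J : Submodule D K).FG ∧ J ≤ I} =>
        ((vOp (J : FractionalIdeal D⁰ K) : FractionalIdeal D⁰ K) : Submodule D K)) := by
    rintro ⟨J₁, h1, h1'⟩ ⟨J₂, h2, h2'⟩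
    refine ⟨⟨J₁ ⊔ J₂, by rw [coe_sup]; exact h1.sup h2, sup_le h1' h2'⟩, ?_, ?_⟩
    · exact coe_le_coe.2 (vOp_mono le_sup_left)
    · exact coe_le_coe.2 (vOp_mono le_sup_right)
  have hmem : x ∈ tOp I ↔ x ∈
      (⨆ J : {J : FractionalIdeal D⁰ K // (J : Submodule D K).FG ∧ J ≤ I},
        ((vOp (J : FractionalIdeal D⁰ K) : FractionalIdeal D⁰ K) : Submodule D K)) :=
    Iff.rfl
  rw [hmem, Submodule.mem_iSup_of_directed _ hdir]
  constructor
  · rintro ⟨⟨F, hFG, hFI⟩, hx⟩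
    exact ⟨F, hFG, hFI, hx⟩
  · rintro ⟨F, hFG, hFI, hx⟩
    exact ⟨⟨F, hFG, hFI⟩, hx⟩

private lemma mem_wOp_iff {I : FractionalIdeal D⁰ K} {x : K} :
    x ∈ wOp I ↔ ∃ G : Ideal D, G.FG ∧ ((G : FractionalIdeal D⁰ K))⁻¹ = 1 ∧
      x ∈ I / (G : FractionalIdeal D⁰ K) := by
  haveI : Nonempty {H : Ideal D // H.FG ∧ ((H : FractionalIdeal D⁰ K))⁻¹ = 1} := by
    refine ⟨⟨⊤, ?_, ?_⟩⟩
    · rw [← Ideal.span_singleton_one]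
      exact Submodule.fg_span_singleton 1
    · rw [coeIdeal_top, inv_eq, FractionalIdeal.div_one]
  have hdir : Directed (· ≤ ·)
      (fun H : {H : Ideal D // H.FG ∧ ((H : FractionalIdeal D⁰ K))⁻¹ = 1} =>
        ((I / ((H : Ideal D) : FractionalIdeal D⁰ K) : FractionalIdeal D⁰ K) : Submodule D K)) := by
    classical
    rintro ⟨G₁, h1, h1'⟩ ⟨G₂, h2, h2'⟩
    have hG1 : ((G₁ : FractionalIdeal D⁰ K)) ≠ 0 := ne_zero_of_inv_eq_one h1'
    have hG2 : ((G₂ : FractionalIdeal D⁰ K)) ≠ 0 := ne_zero_of_inv_eq_one h2'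
    have hGmul : ((G₁ * G₂ : Ideal D) : FractionalIdeal D⁰ K) ≠ 0 := by
      rw [coeIdeal_mul]; exact fmul_ne_zero hG1 hG2
    have hGinv : ((G₁ * G₂ : Ideal D) : FractionalIdeal D⁰ K)⁻¹ = 1 := by
      rw [coeIdeal_mul]
      refine le_antisymm ?_ (one_le_inv_of_le_one' (fmul_ne_zero hG1 hG2)
        (by rw [← coeIdeal_mul]; exact coeIdeal_le_one))
      have step1 : ((G₁ : FractionalIdeal D⁰ K) * G₂)⁻¹ * (G₁ : FractionalIdeal D⁰ K) ≤ 1 := by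
        rw [← h2']
        refine le_inv_of_mul_le_one hG2 ?_
        calc ((G₁ : FractionalIdeal D⁰ K) * G₂)⁻¹ * G₁ * G₂
            = ((G₁ : FractionalIdeal D⁰ K) * G₂) * ((G₁ : FractionalIdeal D⁰ K) * G₂)⁻¹ := by ring
          _ ≤ 1 := mul_inv_le_one' _
      rw [← h1']
      exact le_inv_of_mul_le_one hG1 step1
    have hdiv : ∀ (G G' : Ideal D), ((G' : FractionalIdeal D⁰ K)) ≤ 1 → (G : FractionalIdeal D⁰ K) ≠ 0 → (G' : FractionalIdeal D⁰ K) ≠ 0 →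
        I / (G : FractionalIdeal D⁰ K) ≤ I / ((G * G' : Ideal D) : FractionalIdeal D⁰ K) := by
      intro G G' hle hG hG'
      have hGG' : ((G * G' : Ideal D) : FractionalIdeal D⁰ K) ≠ 0 := by
        rw [coeIdeal_mul]; exact fmul_ne_zero hG hG'
      rw [le_div_iff_mul_le hGG', coeIdeal_mul, ← mul_assoc]
      have hIG : I / (G : FractionalIdeal D⁰ K) * (G : FractionalIdeal D⁰ K) ≤ I :=
        (le_div_iff_mul_le hG).mp le_rfl
      calc I / (G : FractionalIdeal D⁰ K) * (G : FractionalIdeal D⁰ K) * (G' : FractionalIdeal D⁰ K)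
          ≤ I * 1 := fmul_mono hIG hle
        _ = I := mul_one I
    refine ⟨⟨G₁ * G₂, Submodule.FG.mul h1 h2, hGinv⟩, ?_, ?_⟩
    · exact coe_le_coe.2 (hdiv G₁ G₂ coeIdeal_le_one hG1 hG2)
    · have := hdiv G₂ G₁ coeIdeal_le_one hG2 hG1
      rw [mul_comm G₂ G₁] at this
      exact coe_le_coe.2 this
  have hmem : x ∈ wOp I ↔ x ∈
      (⨆ H : {H : Ideal D // H.FG ∧ ((H : FractionalIdeal D⁰ K))⁻¹ = 1},
        ((I / ((H : Ideal D) : FractionalIdeal D⁰ K) : FractionalIdeal D⁰ K) : Submodule D K)) :=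
    Iff.rfl
  rw [hmem, Submodule.mem_iSup_of_directed _ hdir]
  constructor
  · rintro ⟨⟨G, hFG, hGi⟩, hx⟩
    exact ⟨G, hFG, hGi, hx⟩
  · rintro ⟨G, hFG, hGi, hx⟩
    exact ⟨⟨G, hFG, hGi⟩, hx⟩

end StarSharpProofB

section StarSharpProofC

variable {D K : Type*} [CommRing D] [IsDomain D] [Field K] [Algebra D K] [IsFractionRing D K]

open FractionalIdeal

private lemma fg_spanSingleton' (x : K) :
    ((spanSingleton D⁰ x : FractionalIdeal D⁰ K) : Submodule D K).FG := by
  rw [coe_spanSingleton]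
  exact Submodule.fg_span_singleton x

private lemma fg_mul_frac {X Y : FractionalIdeal D⁰ K} (hX : (X : Submodule D K).FG)
    (hY : (Y : Submodule D K).FG) :
    ((X * Y : FractionalIdeal D⁰ K) : Submodule D K).FG := by
  rw [coe_mul]
  exact Submodule.FG.mul hX hY

private lemma le_tOp (X : FractionalIdeal D⁰ K) : X ≤ tOp X := by
  intro x hx
  exact mem_tOp_iff.mpr ⟨spanSingleton D⁰ x, fg_spanSingleton' x,
    spanSingleton_le_iff_mem.2 hx, le_vOp _ (mem_spanSingleton_self D⁰ x)⟩

private lemma tOp_le_vOp (X : FractionalIdeal D⁰ K) : tOp X ≤ vOp X := by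
  intro x hx
  obtain ⟨F, _, hFX, hxF⟩ := mem_tOp_iff.mp hx
  exact vOp_mono hFX hxF

private lemma tOp_mono' {X Y : FractionalIdeal D⁰ K} (h : X ≤ Y) : tOp X ≤ tOp Y := by
  intro x hx
  obtain ⟨F, hFG, hFX, hxF⟩ := mem_tOp_iff.mp hx
  exact mem_tOp_iff.mpr ⟨F, hFG, le_trans hFX h, hxF⟩

private lemma tOp_scale (x : K) (X : FractionalIdeal D⁰ K) :
    spanSingleton D⁰ x * tOp X ≤ tOp (spanSingleton D⁰ x * X) := by
  rcases eq_or_ne x 0 with rfl | hx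
  · rw [spanSingleton_zero, zero_mul]
    exact zero_le _
  rw [mul_le]
  intro i hi t ht
  rw [mem_spanSingleton] at hi
  obtain ⟨z, rfl⟩ := hi
  obtain ⟨F, hFG, hFX, htF⟩ := mem_tOp_iff.mp ht
  refine mem_tOp_iff.mpr ⟨spanSingleton D⁰ x * F, fg_mul_frac (fg_spanSingleton' x) hFG, fmul_mono le_rfl hFX, ?_⟩
  · rw [vOp_unit_mul hx]
    have : x * t ∈ spanSingleton D⁰ x * vOp F :=
      mul_mem_mul (mem_spanSingleton_self D⁰ x) htF
    have hsmul : z • x * t = z • (x * t) := by rw [smul_mul_assoc]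
    rw [hsmul]
    exact Submodule.smul_mem _ z this

private lemma tOp_extract {X : FractionalIdeal D⁰ K} (h : (1 : K) ∈ tOp X) :
    ∃ G : FractionalIdeal D⁰ K, (G : Submodule D K).FG ∧ G ≤ X ∧ (1 : K) ∈ vOp G := by
  exact mem_tOp_iff.mp h

private lemma le_wOp (X : FractionalIdeal D⁰ K) : X ≤ wOp X := by
  intro x hx
  refine mem_wOp_iff.mpr ⟨⊤, ?_, ?_, ?_⟩
  · rw [← Ideal.span_singleton_one]
    exact Submodule.fg_span_singleton 1
  · rw [coeIdeal_top, inv_eq, FractionalIdeal.div_one]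
  · rw [coeIdeal_top, FractionalIdeal.div_one]
    exact hx

private lemma wOp_le_vOp (X : FractionalIdeal D⁰ K) : wOp X ≤ vOp X := by
  intro x hx
  obtain ⟨G, _, hGi, hxG⟩ := mem_wOp_iff.mp hx
  exact div_le_vOp hGi hxG

private lemma wOp_mono' {X Y : FractionalIdeal D⁰ K} (h : X ≤ Y) : wOp X ≤ wOp Y := by
  intro x hx
  obtain ⟨G, hFG, hGi, hxG⟩ := mem_wOp_iff.mp hx
  have hG : ((G : FractionalIdeal D⁰ K)) ≠ 0 := ne_zero_of_inv_eq_one hGi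
  refine mem_wOp_iff.mpr ⟨G, hFG, hGi, ?_⟩
  rw [mem_div_iff_span hG] at hxG ⊢
  exact le_trans hxG h

private lemma wOp_scale (x : K) (X : FractionalIdeal D⁰ K) :
    spanSingleton D⁰ x * wOp X ≤ wOp (spanSingleton D⁰ x * X) := by
  rw [mul_le]
  intro i hi t ht
  rw [mem_spanSingleton] at hi
  obtain ⟨z, rfl⟩ := hi
  obtain ⟨G, hFG, hGi, htG⟩ := mem_wOp_iff.mp ht
  have hG : ((G : FractionalIdeal D⁰ K)) ≠ 0 := ne_zero_of_inv_eq_one hGi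
  refine mem_wOp_iff.mpr ⟨G, hFG, hGi, ?_⟩
  rw [mem_div_iff_span hG] at htG
  rw [mem_div_iff_span hG]
  have h1 : spanSingleton D⁰ (z • x * t) = spanSingleton D⁰ (z • (x * t)) := by
    rw [smul_mul_assoc]
  have h2 : spanSingleton D⁰ (z • (x * t)) ≤ spanSingleton D⁰ (x * t) := by
    rw [spanSingleton_le_iff_mem, mem_spanSingleton]
    exact ⟨z, rfl⟩
  have h3 : spanSingleton D⁰ (x * t) = spanSingleton D⁰ x * spanSingleton D⁰ t := by
    rw [spanSingleton_mul_spanSingleton]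
  calc spanSingleton D⁰ (z • x * t) * (G : FractionalIdeal D⁰ K)
      ≤ spanSingleton D⁰ x * spanSingleton D⁰ t * (G : FractionalIdeal D⁰ K) := by
        rw [h1, ← h3]; exact fmul_mono h2 le_rfl
    _ = spanSingleton D⁰ x * (spanSingleton D⁰ t * (G : FractionalIdeal D⁰ K)) := by ring
    _ ≤ spanSingleton D⁰ x * X := fmul_mono le_rfl htG

private lemma wOp_extract {X : FractionalIdeal D⁰ K} (h : (1 : K) ∈ wOp X) :
    ∃ G : FractionalIdeal D⁰ K, (G : Submodule D K).FG ∧ G ≤ X ∧ (1 : K) ∈ vOp G := by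
  obtain ⟨G, hFG, hGi, hxG⟩ := mem_wOp_iff.mp h
  have hG : ((G : FractionalIdeal D⁰ K)) ≠ 0 := ne_zero_of_inv_eq_one hGi
  refine ⟨(G : FractionalIdeal D⁰ K), ?_, ?_, ?_⟩
  · exact (coeIdeal_fg D⁰ (IsFractionRing.injective D K) G).2 hFG
  · rw [mem_div_iff_span hG, spanSingleton_one, one_mul] at hxG
    exact hxG
  · show (1 : K) ∈ (((G : FractionalIdeal D⁰ K))⁻¹)⁻¹
    rw [hGi, inv_eq, FractionalIdeal.div_one]
    exact one_mem_one D⁰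

private lemma wOp_le_tOp (X : FractionalIdeal D⁰ K) : wOp X ≤ tOp X := by
  intro x hx
  rcases eq_or_ne x 0 with rfl | hx0
  · exact Submodule.zero_mem _
  obtain ⟨G, hFG, hGi, hxG⟩ := mem_wOp_iff.mp hx
  have hG : ((G : FractionalIdeal D⁰ K)) ≠ 0 := ne_zero_of_inv_eq_one hGi
  rw [mem_div_iff_span hG] at hxG
  refine mem_tOp_iff.mpr ⟨spanSingleton D⁰ x * (G : FractionalIdeal D⁰ K),
    fg_mul_frac (fg_spanSingleton' x)
      ((coeIdeal_fg D⁰ (IsFractionRing.injective D K) G).2 hFG), hxG, ?_⟩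
  · rw [vOp_unit_mul hx0]
    have : vOp ((G : FractionalIdeal D⁰ K)) = 1 := by
      show (((G : FractionalIdeal D⁰ K))⁻¹)⁻¹ = 1
      rw [hGi, inv_eq, FractionalIdeal.div_one]
    rw [this, mul_one]
    exact mem_spanSingleton_self D⁰ x

end StarSharpProofC

section StarSharpProofD

variable {D K : Type*} [CommRing D] [IsDomain D] [Field K] [Algebra D K] [IsFractionRing D K]

open FractionalIdeal
open scoped Pointwise

private lemma coeIdeal_ne_zero_of_ne {N : Ideal D} (h : N ≠ 0) :
    (N : FractionalIdeal D⁰ K) ≠ 0 :=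
  coeIdeal_ne_zero.mpr (by rwa [← Submodule.zero_eq_bot])

private lemma exists_fg_factor {X Y G : FractionalIdeal D⁰ K} (hG : (G : Submodule D K).FG)
    (h : G ≤ X * Y) :
    ∃ X₀ Y₀ : FractionalIdeal D⁰ K, (X₀ : Submodule D K).FG ∧ (Y₀ : Submodule D K).FG ∧
      X₀ ≤ X ∧ Y₀ ≤ Y ∧ G ≤ X₀ * Y₀ := by
  classical
  obtain ⟨S, hS⟩ := hG
  have key : ∀ g ∈ S, ∃ TT' : Finset K × Finset K, ((TT'.1 : Finset K) : Set K) ⊆ X ∧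
      ((TT'.2 : Finset K) : Set K) ⊆ Y ∧
      g ∈ Submodule.span D (((TT'.1 : Finset K) : Set K) * ((TT'.2 : Finset K) : Set K)) := by
    intro g hg
    have hgG : g ∈ G := by
      have : g ∈ (G : Submodule D K) := by
        rw [← hS]; exact Submodule.subset_span (by exact_mod_cast hg)
      exact this
    obtain ⟨T, T', hT, hT', hmem⟩ := mem_span_mul_finite_of_mem_mul (h hgG)
    exact ⟨(T, T'), hT, hT', hmem⟩
  choose f hf1 hf2 hf3 using key
  set T : Finset K := S.attach.biUnion (fun g => (f g g.2).1) with hT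
  set T' : Finset K := S.attach.biUnion (fun g => (f g g.2).2) with hT'
  have hTX : ((T : Finset K) : Set K) ⊆ (X : Submodule D K) := by
    intro t ht
    have ht' : t ∈ T := ht
    rw [hT, Finset.mem_biUnion] at ht'
    obtain ⟨⟨g, hg⟩, -, hmem⟩ := ht'
    exact hf1 g hg (Finset.mem_coe.mpr hmem)
  have hTY : ((T' : Finset K) : Set K) ⊆ (Y : Submodule D K) := by
    intro t ht
    have ht' : t ∈ T' := ht
    rw [hT', Finset.mem_biUnion] at ht'
    obtain ⟨⟨g, hg⟩, -, hmem⟩ := ht'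
    exact hf2 g hg (Finset.mem_coe.mpr hmem)
  have hXle : Submodule.span D ((T : Finset K) : Set K) ≤ (X : Submodule D K) :=
    Submodule.span_le.mpr hTX
  have hYle : Submodule.span D ((T' : Finset K) : Set K) ≤ (Y : Submodule D K) :=
    Submodule.span_le.mpr hTY
  refine ⟨⟨Submodule.span D ((T : Finset K) : Set K), isFractional_of_le hXle⟩,
    ⟨Submodule.span D ((T' : Finset K) : Set K), isFractional_of_le hYle⟩,
    ?_, ?_, ?_, ?_, ?_⟩
  · exact Submodule.fg_span (Finset.finite_toSet T)
  · exact Submodule.fg_span (Finset.finite_toSet T')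
  · exact hXle
  · exact hYle
  · rw [← coe_le_coe]
    erw [coe_mul (⟨Submodule.span D ((T : Finset K) : Set K), isFractional_of_le hXle⟩ : FractionalIdeal D⁰ K)
      (⟨Submodule.span D ((T' : Finset K) : Set K), isFractional_of_le hYle⟩ : FractionalIdeal D⁰ K)]
    show (G : Submodule D K) ≤ Submodule.span D ((T : Finset K) : Set K) *
      Submodule.span D ((T' : Finset K) : Set K)
    rw [Submodule.span_mul_span, ← hS]
    refine Submodule.span_le.mpr ?_
    intro g hg
    have hg' : g ∈ S := by exact_mod_cast hg
    refine Submodule.span_mono ?_ (hf3 g hg')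
    refine Set.mul_subset_mul ?_ ?_
    · intro y hy
      show y ∈ T
      rw [hT, Finset.mem_biUnion]
      exact ⟨⟨g, hg'⟩, Finset.mem_attach _ _, hy⟩
    · intro y hy
      show y ∈ T'
      rw [hT', Finset.mem_biUnion]
      exact ⟨⟨g, hg'⟩, Finset.mem_attach _ _, hy⟩

end StarSharpProofD

section StarSharpProofE

variable {D K : Type*} [CommRing D] [IsDomain D] [Field K] [Algebra D K] [IsFractionRing D K]

open FractionalIdeal

private lemma sharp_imp_fg_inv {s : FractionalIdeal D⁰ K → FractionalIdeal D⁰ K}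
    (hsharp : IsSharpOp s)
    (hle : ∀ X : FractionalIdeal D⁰ K, X ≤ s X)
    (hlev : ∀ X : FractionalIdeal D⁰ K, s X ≤ vOp X)
    (hmono : ∀ {X Y : FractionalIdeal D⁰ K}, X ≤ Y → s X ≤ s Y)
    (hscale : ∀ (x : K) (X : FractionalIdeal D⁰ K),
      spanSingleton D⁰ x * s X ≤ s (spanSingleton D⁰ x * X))
    (hextract : ∀ X : FractionalIdeal D⁰ K, (1 : K) ∈ s X →
      ∃ G : FractionalIdeal D⁰ K, (G : Submodule D K).FG ∧ G ≤ X ∧ (1 : K) ∈ vOp G) :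
    ∀ A : Ideal D, A ≠ 0 → A.FG →
      ∃ E : FractionalIdeal D⁰ K, (E : Submodule D K).FG ∧
        E ≤ ((A : FractionalIdeal D⁰ K))⁻¹ ∧
        (1 : K) ∈ vOp ((A : FractionalIdeal D⁰ K) * E) := by
  intro A hA hAfg
  obtain ⟨a, haA, ha0⟩ := Submodule.exists_mem_ne_zero_of_ne_bot
    (p := A) (by rwa [← Submodule.zero_eq_bot])
  have haK : algebraMap D K a ≠ 0 := by
    intro h
    exact ha0 ((IsFractionRing.to_map_eq_zero_iff (K := K)).mp h)
  set aK : K := algebraMap D K a with haKdef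
  set P : FractionalIdeal D⁰ K := spanSingleton D⁰ aK with hPdef
  set P' : FractionalIdeal D⁰ K := spanSingleton D⁰ aK⁻¹ with hP'def
  have hPP' : P * P' = 1 := spanSingleton_mul_inv_self haK
  have hP'P : P' * P = 1 := by rw [mul_comm]; exact hPP'
  set Ia : Ideal D := Ideal.span {a} with hIadef
  have hIa0 : Ia ≠ 0 := by
    rw [hIadef, Ne, Submodule.zero_eq_bot, Ideal.span_singleton_eq_bot]
    exact ha0
  have hIacoe : ((Ia : FractionalIdeal D⁰ K)) = P := coeIdeal_span_singleton a
  set B : Ideal D := Ia.colon A with hBdef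
  have haB : a ∈ B := by
    rw [hBdef]
    refine Submodule.mem_colon.mpr fun p hp => ?_
    rw [smul_eq_mul, hIadef]
    exact Ideal.mem_span_singleton.mpr ⟨p, rfl⟩
  have hB0 : B ≠ 0 := by
    intro h
    rw [h] at haB
    exact ha0 (by simpa using haB)
  have hABle : A * B ≤ Ia := Ideal.mul_le.mpr fun r hr b hb => by
    have := Submodule.mem_colon.mp hb r hr
    rwa [smul_eq_mul, mul_comm] at this
  obtain ⟨H, J, hH0, hJ0, heq, hAH, hBJ⟩ := hsharp Ia A B hIa0 hA hB0 hABle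
  set cH : FractionalIdeal D⁰ K := (H : FractionalIdeal D⁰ K) with hcHdef
  set cJ : FractionalIdeal D⁰ K := (J : FractionalIdeal D⁰ K) with hcJdef
  set cA : FractionalIdeal D⁰ K := (A : FractionalIdeal D⁰ K) with hcAdef
  set cB : FractionalIdeal D⁰ K := (B : FractionalIdeal D⁰ K) with hcBdef
  have hcH0 : cH ≠ 0 := coeIdeal_ne_zero_of_ne hH0
  have hcJ0 : cJ ≠ 0 := coeIdeal_ne_zero_of_ne hJ0
  have hcA0 : cA ≠ 0 := coeIdeal_ne_zero_of_ne hA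
  have hP0 : P ≠ 0 := by rw [hPdef, Ne, spanSingleton_eq_zero_iff]; exact haK
  have hvP : vOp P = P := vOp_of_mul_eq_one hPP'
  have hsP : s P = P := le_antisymm (le_trans (hlev P) (le_of_eq hvP)) (hle P)
  have hsHJ : s (cH * cJ) = P := by rw [← heq, hIacoe, hsP]
  have hHJle : cH * cJ ≤ P := by
    have := hle (cH * cJ)
    rwa [hsHJ] at this
  -- P * cA⁻¹ ≤ cB
  have hBA : P * cA⁻¹ ≤ cB := by
    rw [mul_le]
    intro i hi j hj
    rw [hPdef, mem_spanSingleton] at hi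
    obtain ⟨z, rfl⟩ := hi
    have haKA : aK ∈ cA := mem_coeIdeal_of_mem D⁰ haA
    have hjy : ∀ y ∈ cA, j * y ∈ (1 : FractionalIdeal D⁰ K) :=
      (mem_inv_iff hcA0).mp hj
    have hja : j * aK ∈ (1 : FractionalIdeal D⁰ K) := hjy aK haKA
    have haj : aK * j ∈ (1 : FractionalIdeal D⁰ K) := by rwa [mul_comm] at hja
    obtain ⟨b, hb⟩ := (mem_one_iff D⁰).mp haj
    have hbB : b ∈ B := by
      rw [hBdef]
      refine Submodule.mem_colon.mpr fun p hp => ?_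
      rw [smul_eq_mul, hIadef]
      have hpA : algebraMap D K p ∈ cA := mem_coeIdeal_of_mem D⁰ hp
      obtain ⟨d, hd⟩ := (mem_one_iff D⁰).mp (hjy _ hpA)
      have hmapeq : algebraMap D K (b * p) = algebraMap D K (a * d) := by
        rw [_root_.map_mul, _root_.map_mul, hb, hd]
        ring
      have : b * p = a * d := IsFractionRing.injective D K hmapeq
      rw [this]
      exact Ideal.mem_span_singleton.mpr ⟨d, rfl⟩
    have : z • aK * j = algebraMap D K (z * b) := by
      rw [_root_.map_mul, hb, smul_mul_assoc, Algebra.smul_def]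
    rw [this]
    exact mem_coeIdeal_of_mem D⁰ (Ideal.mul_mem_left B z hbB)
  have hP'J : P' * cJ ≤ cH⁻¹ := by
    refine le_inv_of_mul_le_one hcH0 ?_
    calc P' * cJ * cH = P' * (cH * cJ) := by ring
      _ ≤ P' * P := fmul_mono le_rfl hHJle
      _ = 1 := hP'P
  have hP'0 : P' ≠ 0 := by
    rw [hP'def, Ne, spanSingleton_eq_zero_iff]
    exact inv_ne_zero haK
  have hP'J0 : P' * cJ ≠ 0 := fmul_ne_zero hP'0 hcJ0
  have hHvA : cH ≤ vOp cA := by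
    have h1 : P * cA⁻¹ ≤ vOp cJ := le_trans hBA (le_trans hBJ (hlev cJ))
    have hPA0 : P * cA⁻¹ ≠ 0 := fmul_ne_zero hP0 (inv_ne_zero' hcA0)
    have h2 : cJ⁻¹ ≤ (P * cA⁻¹)⁻¹ := by
      rw [← inv_vOp cJ]
      exact inv_anti_mono hPA0 (vOp_ne_zero hcJ0) h1
    have h3 : (P * cA⁻¹)⁻¹ = P' * vOp cA := by
      rw [inv_unit_mul hPP' (inv_ne_zero' hcA0)]
      rfl
    have h4 : cH ≤ (P' * cJ)⁻¹ := by
      refine le_inv_of_mul_le_one hP'J0 ?_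
      calc cH * (P' * cJ) = P' * (cH * cJ) := by ring
        _ ≤ P' * P := fmul_mono le_rfl hHJle
        _ = 1 := hP'P
    have h5 : (P' * cJ)⁻¹ = P * cJ⁻¹ := inv_unit_mul hP'P hcJ0
    calc cH ≤ P * cJ⁻¹ := by rw [← h5]; exact h4
      _ ≤ P * (P' * vOp cA) := fmul_mono le_rfl (by rw [← h3]; exact h2)
      _ = (P * P') * vOp cA := by ring
      _ = vOp cA := by rw [hPP', one_mul]
  have hinvHA : cH⁻¹ = cA⁻¹ := by
    refine le_antisymm ?_ ?_
    · rw [← inv_vOp cH]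
      exact inv_anti_mono hcA0 (vOp_ne_zero hcH0) (le_trans hAH (hlev cH))
    · rw [← inv_vOp cA]
      exact inv_anti_mono hcH0 (vOp_ne_zero hcA0) hHvA
  have hone : (1 : FractionalIdeal D⁰ K) ≤ s (cH * cA⁻¹) := by
    calc (1 : FractionalIdeal D⁰ K) = P' * P := hP'P.symm
      _ = P' * s (cH * cJ) := by rw [hsHJ]
      _ ≤ s (P' * (cH * cJ)) := hscale _ _
      _ ≤ s (cH * cH⁻¹) := hmono (by
          calc P' * (cH * cJ) = cH * (P' * cJ) := by ring
            _ ≤ cH * cH⁻¹ := fmul_mono le_rfl hP'J)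
      _ = s (cH * cA⁻¹) := by rw [hinvHA]
  have h1mem : (1 : K) ∈ s (cH * cA⁻¹) := hone (one_mem_one D⁰)
  obtain ⟨G, hGfg, hGle, hG1⟩ := hextract _ h1mem
  obtain ⟨H₀, E, hH₀fg, hEfg, hH₀le, hEle, hGHE⟩ := exists_fg_factor hGfg hGle
  refine ⟨E, hEfg, hEle, ?_⟩
  have hfinal : vOp G ≤ vOp (cA * E) := by
    rw [← vOp_vOp_mul cA E]
    exact vOp_mono (le_trans hGHE (fmul_mono (le_trans hH₀le hHvA) le_rfl))
  exact hfinal hG1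

end StarSharpProofE

section StarSharpProofF

variable {D K : Type*} [CommRing D] [IsDomain D] [Field K] [Algebra D K] [IsFractionRing D K]

open FractionalIdeal

lemma tOp_eq_wOp_of_fginv
    (hinv : ∀ A : Ideal D, A ≠ 0 → A.FG → ∃ E : FractionalIdeal D⁰ K,
      (E : Submodule D K).FG ∧ E ≤ ((A : FractionalIdeal D⁰ K))⁻¹ ∧
      (1 : K) ∈ vOp ((A : FractionalIdeal D⁰ K) * E))
    (N : Ideal D) :
    tOp ((N : FractionalIdeal D⁰ K)) = wOp ((N : FractionalIdeal D⁰ K)) := by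
  refine le_antisymm ?_ (wOp_le_tOp _)
  intro x hx
  obtain ⟨F, hFfg, hFN, hxF⟩ := mem_tOp_iff.mp hx
  rcases eq_or_ne F 0 with rfl | hF0
  · rw [vOp_zero] at hxF
    have hx0 : x = 0 := (mem_zero_iff D⁰).mp hxF
    rw [hx0]
    exact Submodule.zero_mem _
  obtain ⟨A, rfl⟩ := le_one_iff_exists_coeIdeal.mp (le_trans hFN coeIdeal_le_one)
  have hA0 : A ≠ 0 := by
    intro h
    exact hF0 (by rw [h, Submodule.zero_eq_bot, coeIdeal_bot])
  have hAfg : A.FG := (coeIdeal_fg D⁰ (IsFractionRing.injective D K) A).1 hFfg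
  obtain ⟨E, hEfg, hEle, h1v⟩ := hinv A hA0 hAfg
  have hprod_le_one : (A : FractionalIdeal D⁰ K) * E ≤ 1 :=
    le_trans (fmul_mono le_rfl hEle) (mul_inv_le_one' _)
  obtain ⟨Gid, hGid⟩ := le_one_iff_exists_coeIdeal.mp hprod_le_one
  have hGne : (A : FractionalIdeal D⁰ K) * E ≠ 0 := by
    intro h
    rw [h, vOp_zero] at h1v
    exact one_ne_zero ((mem_zero_iff D⁰).mp h1v)
  have hGidfg : Gid.FG := by
    refine (coeIdeal_fg D⁰ (IsFractionRing.injective D K) Gid).1 ?_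
    rw [hGid]
    exact fg_mul_frac ((coeIdeal_fg D⁰ (IsFractionRing.injective D K) A).2 hAfg) hEfg
  have hGinv : ((Gid : FractionalIdeal D⁰ K))⁻¹ = 1 := by
    rw [hGid]
    refine le_antisymm ?_ (one_le_inv_of_le_one' hGne hprod_le_one)
    intro y hy
    have h1 := (mem_inv_iff (inv_ne_zero' hGne)).mp h1v y hy
    rwa [one_mul] at h1
  refine mem_wOp_iff.mpr ⟨Gid, hGidfg, hGinv, ?_⟩
  rw [mem_div_iff_span (ne_zero_of_inv_eq_one hGinv), hGid]
  have hx' : spanSingleton D⁰ x ≤ (((A : FractionalIdeal D⁰ K))⁻¹)⁻¹ :=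
    spanSingleton_le_iff_mem.2 hxF
  have hxE : spanSingleton D⁰ x * E ≤ 1 := by
    calc spanSingleton D⁰ x * E
        ≤ (((A : FractionalIdeal D⁰ K))⁻¹)⁻¹ * ((A : FractionalIdeal D⁰ K))⁻¹ :=
          fmul_mono hx' hEle
      _ ≤ 1 := by rw [mul_comm]; exact mul_inv_le_one' _
  calc spanSingleton D⁰ x * ((A : FractionalIdeal D⁰ K) * E)
      = (A : FractionalIdeal D⁰ K) * (spanSingleton D⁰ x * E) := by ring
    _ ≤ (A : FractionalIdeal D⁰ K) * 1 := fmul_mono le_rfl hxE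
    _ = (A : FractionalIdeal D⁰ K) := mul_one _
    _ ≤ (N : FractionalIdeal D⁰ K) := hFN

end StarSharpProofF

/-- A domain `D` is `t`-sharp if and only if `D` is `w`-sharp. -/
theorem statement12 (D : Type*) [CommRing D] [IsDomain D]
    (K : Type*) [Field K] [Algebra D K] [IsFractionRing D K] :
    IsSharpOp (D := D) (K := K) tOp ↔ IsSharpOp (D := D) (K := K) wOp := by
  have main : ∀ (star star' : FractionalIdeal D⁰ K → FractionalIdeal D⁰ K),
      (∀ N : Ideal D, star ((N : FractionalIdeal D⁰ K)) = star' ((N : FractionalIdeal D⁰ K))) →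
      IsSharpOp star → IsSharpOp star' := by
    intro star star' hstareq hsharp I A B hI hA hB hAB
    obtain ⟨H, J, hH, hJ, heq, hAH, hBJ⟩ := hsharp I A B hI hA hB hAB
    refine ⟨H, J, hH, hJ, ?_, ?_, ?_⟩
    · calc star' (I : FractionalIdeal D⁰ K) = star (I : FractionalIdeal D⁰ K) :=
            (hstareq I).symm
        _ = star ((H : FractionalIdeal D⁰ K) * (J : FractionalIdeal D⁰ K)) := heq
        _ = star (((H * J : Ideal D) : FractionalIdeal D⁰ K)) := by
            rw [FractionalIdeal.coeIdeal_mul]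
        _ = star' (((H * J : Ideal D) : FractionalIdeal D⁰ K)) := hstareq _
        _ = star' ((H : FractionalIdeal D⁰ K) * (J : FractionalIdeal D⁰ K)) := by
            rw [FractionalIdeal.coeIdeal_mul]
    · rw [← hstareq H]; exact hAH
    · rw [← hstareq J]; exact hBJ
  constructor
  · intro hsharp
    have hinv := sharp_imp_fg_inv hsharp le_tOp tOp_le_vOp (fun {X Y} h => tOp_mono' h)
      tOp_scale (fun X h => tOp_extract h)
    exact main tOp wOp (tOp_eq_wOp_of_fginv hinv) hsharp
  · intro hsharp
    have hinv := sharp_imp_fg_inv hsharp le_wOp wOp_le_vOp (fun {X Y} h => wOp_mono' h)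
      wOp_scale (fun X h => wOp_extract h)
    exact main wOp tOp (fun N => (tOp_eq_wOp_of_fginv hinv N).symm) hsharp
end
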